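/- arXiv:1303.7256 — 4 statements merged into one kernel-verified Lean document; each statement's English description precedes it below -/
import Mathlib

section
/- Let c > 0 be fixed. Then, as α → 0⁺, ∑_{p∈ℤ} p·e^{-αp² + 2cp} is asymptotic to (c/α)·√(π/α)·e^{c²/α}; precisely, lim_{α→0⁺} (α^{3/2}/(c√π))·e^{-c²/α} · ∑_{p∈ℤ} p·e^{-αp² + 2cp} = 1. -/
open Filter

section AuxGaussLemmas

open Real Filter Complex


lemma summable_gauss (β γ : ℝ) (hβ : 0 < β) :
    Summable fun n : ℤ => rexp (-β * (n : ℝ) ^ 2 + 2 * γ * (n : ℝ)) := by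
  have hs : Summable fun n : ℕ => ((n : ℝ)) ^ (-2 : ℝ) :=
    Real.summable_nat_rpow.mpr (by norm_num)
  have key : ∀ b : ℝ, Summable fun n : ℕ => rexp (-β * (n : ℝ) ^ 2 + b * (n : ℝ)) := by
    intro b
    refine summable_of_isBigO_nat hs ?_
    exact ((rexp_neg_quadratic_isLittleO_rpow_atTop (neg_neg_iff_pos.mpr hβ) b
      (-2)).isBigO.comp_tendsto tendsto_natCast_atTop_atTop)
  refine Summable.of_nat_of_neg_add_one ?_ ?_
  · simpa using key (2 * γ)
  · have := ((key (-(2*γ))).comp_injective (add_left_injective 1))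
    refine this.congr fun n => ?_
    simp only [Function.comp_apply]
    congr 1
    push_cast
    ring

lemma gauss_est (β γ : ℝ) (hβ : 0 < β) :
    |(∑' n : ℤ, rexp (-β * (n:ℝ)^2 + 2*γ*(n:ℝ))) - Real.sqrt (π/β) * rexp (γ^2/β)|
      ≤ Real.sqrt (π/β) * rexp (γ^2/β) *
        (2 * (rexp (-(π^2)/β) * (1 - rexp (-(π^2)/β))⁻¹)) := by
  have hπ : (π:ℂ) ≠ 0 := Complex.ofReal_ne_zero.mpr Real.pi_ne_zero
  have hβ' : (β:ℂ) ≠ 0 := Complex.ofReal_ne_zero.mpr hβ.ne'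
  set r : ℝ := rexp (-(π^2)/β) with hrdef
  have hr0 : 0 < r := Real.exp_pos _
  have hr1 : r < 1 := Real.exp_lt_one_iff.mpr
    (div_neg_of_neg_of_pos (neg_neg_iff_pos.mpr (by positivity)) hβ)
  set f : ℤ → ℂ := fun n =>
    Complex.exp (-(π:ℂ) / ((β/π : ℝ):ℂ) * ((n:ℂ) + Complex.I * ((γ/π : ℝ):ℂ))^2) with hfdef
  have hterm : ∀ n : ℤ, f n =
      ((rexp (γ^2/β - π^2*(n:ℝ)^2/β) : ℝ) : ℂ) *
        Complex.exp (((-(2*π*γ*(n:ℝ)/β) : ℝ):ℂ) * Complex.I) := by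
    intro n
    have hI : Complex.I^2 = -1 := Complex.I_sq
    have harg : -(π:ℂ) / ((β/π : ℝ):ℂ) * ((n:ℂ) + Complex.I * ((γ/π : ℝ):ℂ))^2
        = ((γ^2/β - π^2*(n:ℝ)^2/β : ℝ):ℂ) + ((-(2*π*γ*(n:ℝ)/β) : ℝ):ℂ) * Complex.I := by
      push_cast
      field_simp
      linear_combination (-(γ:ℂ)^2) * hI
    rw [hfdef]
    simp only []
    rw [harg, Complex.exp_add, Complex.ofReal_exp]
  have hnorm : ∀ n : ℤ, ‖f n‖ = rexp (γ^2/β) * rexp (-(π^2) * (n:ℝ)^2 / β) := by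
    intro n
    rw [hterm n, norm_mul, Complex.norm_real, Complex.norm_exp_ofReal_mul_I, mul_one,
      Real.norm_eq_abs, abs_of_pos (Real.exp_pos _), ← Real.exp_add]
    congr 1
    ring
  have hf0 : f 0 = ((rexp (γ^2/β) : ℝ) : ℂ) := by
    rw [hterm 0]
    push_cast
    norm_num
  have hsummand : Summable fun n : ℤ => rexp (γ^2/β) * rexp (-(π^2) * (n:ℝ)^2 / β) := by
    refine ((summable_gauss (π^2/β) 0 (by positivity)).mul_left (rexp (γ^2/β))).congr fun n => ?_
    congr 1
    ring
  have hsum_norm : Summable fun n : ℤ => ‖f n‖ := hsummand.congr fun n => (hnorm n).symm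
  have hsumf : Summable f := hsum_norm.of_norm
  have ha : 0 < (((β/π : ℝ)):ℂ).re := by
    rw [Complex.ofReal_re]; positivity
  have key := Complex.tsum_exp_neg_quadratic ha ((γ/π : ℝ):ℂ)
  have hL : (∑' n : ℤ, Complex.exp (-(π:ℂ) * ((β/π:ℝ):ℂ) * (n:ℂ)^2 + 2*(π:ℂ)*((γ/π:ℝ):ℂ)*(n:ℂ)))
      = (((∑' n : ℤ, rexp (-β*(n:ℝ)^2+2*γ*(n:ℝ))) : ℝ) : ℂ) := by
    rw [Complex.ofReal_tsum]
    refine tsum_congr fun n => ?_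
    have h1 : (-(π:ℂ) * ((β/π : ℝ):ℂ) * (n:ℂ)^2 + 2*(π:ℂ)*((γ/π : ℝ):ℂ)*(n:ℂ))
        = ((-β*(n:ℝ)^2+2*γ*(n:ℝ) : ℝ):ℂ) := by
      push_cast
      field_simp
    rw [h1, Complex.ofReal_exp]
  have hsqrt : 1 / (((β/π:ℝ)):ℂ) ^ ((1:ℂ)/2) = ((Real.sqrt (π/β) : ℝ) : ℂ) := by
    have h2 : (((β/π:ℝ)):ℂ) ^ ((1:ℂ)/2) = ((((β/π) ^ ((1:ℝ)/2) : ℝ)):ℂ) := by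
      rw [Complex.ofReal_cpow (by positivity)]
      norm_num
    rw [h2, show Real.sqrt (π/β) = ((β/π) ^ ((1:ℝ)/2))⁻¹ by
      rw [Real.sqrt_eq_rpow, show π/β = (β/π)⁻¹ by field_simp, Real.inv_rpow (by positivity)],
      one_div, ← Complex.ofReal_inv]
  have hΘ : (((∑' n : ℤ, rexp (-β*(n:ℝ)^2+2*γ*(n:ℝ))) : ℝ) : ℂ)
      = ((Real.sqrt (π/β) : ℝ):ℂ) * ∑' n, f n := by
    rw [← hL, key, hsqrt]
  -- bound on ‖∑' f - rexp (γ²/β)‖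
  set v : ℤ → ℝ := fun n => if n = 0 then 0 else r ^ n.natAbs with hvdef
  have hvnonneg : ∀ n, 0 ≤ v n := by
    intro n; rw [hvdef]; dsimp only; split <;> positivity
  have hle : ∀ n : ℤ, ‖if n = 0 then 0 else f n‖ ≤ rexp (γ^2/β) * v n := by
    intro n
    rw [hvdef]; dsimp only
    by_cases h : n = 0
    · simp [h]
    · rw [if_neg h, if_neg h, hnorm n]
      refine mul_le_mul_of_nonneg_left ?_ (Real.exp_pos _).le
      rw [hrdef, ← Real.exp_nat_mul]
      apply Real.exp_le_exp.mpr
      have hk1 : (1:ℝ) ≤ (n.natAbs : ℝ) := by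
        have := Int.natAbs_pos.mpr h
        exact_mod_cast this
      have hk2 : ((n:ℝ))^2 = ((n.natAbs : ℝ))^2 := by
        rw [Nat.cast_natAbs]
        push_cast
        exact (_root_.sq_abs _).symm
      have hKK : ((n.natAbs:ℝ)) ≤ ((n.natAbs:ℝ))^2 := by nlinarith
      rw [hk2, show ((n.natAbs:ℝ)) * (-(π^2)/β) = ((n.natAbs:ℝ) * -(π^2))/β by ring,
        div_le_div_iff₀ hβ hβ]
      nlinarith [mul_nonneg (mul_nonneg (sq_nonneg π) hβ.le) (sub_nonneg.mpr hKK)]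
  -- summability of v and its tsum
  have geo : Summable fun n : ℕ => r ^ n := summable_geometric_of_lt_one hr0.le hr1
  have hvnat : ∀ n : ℕ, v (n : ℤ) = if n = 0 then 0 else r ^ n := by
    intro n
    rw [hvdef]
    simp [Int.natCast_eq_zero]
  have hvneg : ∀ n : ℕ, v (-((n:ℤ) + 1)) = r ^ (n + 1) := by
    intro n
    rw [hvdef]
    dsimp only
    have h1 : (-((n:ℤ) + 1)) ≠ 0 := by omega
    have h2 : (-((n:ℤ) + 1)).natAbs = n + 1 := by omega
    rw [if_neg h1, h2]
  have sum1 : Summable fun n : ℕ => v (n : ℤ) := by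
    refine geo.of_nonneg_of_le (fun n => hvnonneg _) fun n => ?_
    rw [hvnat]
    split
    · positivity
    · exact le_rfl
  have sum2 : Summable fun n : ℕ => v (-((n:ℤ) + 1)) :=
    (geo.comp_injective Nat.succ_injective).congr fun n => (hvneg n).symm
  have hvsum : Summable v := Summable.of_nat_of_neg_add_one sum1 sum2
  have hgeo1 : ∑' n : ℕ, r ^ (n + 1) = r * (1 - r)⁻¹ := by
    have : ∀ n : ℕ, r ^ (n + 1) = r * r ^ n := fun n => by rw [pow_succ]; ring
    simp only [this]
    rw [tsum_mul_left, tsum_geometric_of_lt_one hr0.le hr1]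
  have htsumv : ∑' n : ℤ, v n = 2 * (r * (1 - r)⁻¹) := by
    rw [tsum_of_nat_of_neg_add_one sum1 sum2]
    have e1 : ∑' n : ℕ, v ((n:ℤ)) = r * (1 - r)⁻¹ := by
      rw [Summable.tsum_eq_zero_add sum1]
      have h0 : v ((0:ℕ):ℤ) = 0 := by rw [hvnat]; simp
      have hs : ∀ n : ℕ, v (((n+1:ℕ)):ℤ) = r ^ (n+1) := by
        intro n; rw [hvnat]; simp
      rw [h0, zero_add]
      rw [tsum_congr hs, hgeo1]
    have e2 : ∑' n : ℕ, v (-((n:ℤ) + 1)) = r * (1 - r)⁻¹ := by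
      rw [tsum_congr hvneg, hgeo1]
    rw [e1, e2]; ring
  have hsum_ite : Summable fun n : ℤ => ‖if n = 0 then 0 else f n‖ := by
    refine hsum_norm.of_nonneg_of_le (fun n => norm_nonneg _) fun n => ?_
    split
    · simp
    · exact le_rfl
  have hbound : ‖(∑' n, f n) - ((rexp (γ^2/β) : ℝ):ℂ)‖ ≤ rexp (γ^2/β) * (2 * (r * (1-r)⁻¹)) := by
    have hsplit := Summable.tsum_eq_add_tsum_ite hsumf 0
    rw [hf0] at hsplit
    have hd : (∑' n, f n) - ((rexp (γ^2/β):ℝ):ℂ) = ∑' n : ℤ, if n = 0 then 0 else f n := by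
      rw [hsplit]; ring
    rw [hd]
    calc ‖∑' n : ℤ, if n = 0 then 0 else f n‖ ≤ ∑' n : ℤ, ‖if n = 0 then 0 else f n‖ :=
          norm_tsum_le_tsum_norm hsum_ite
      _ ≤ ∑' n : ℤ, rexp (γ^2/β) * v n := Summable.tsum_le_tsum hle hsum_ite (hvsum.mul_left _)
      _ = rexp (γ^2/β) * ∑' n, v n := tsum_mul_left
      _ = rexp (γ^2/β) * (2 * (r * (1-r)⁻¹)) := by rw [htsumv]
  set S := ∑' n : ℤ, rexp (-β*(n:ℝ)^2+2*γ*(n:ℝ)) with hSdef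
  have hdiff : ((S - Real.sqrt (π/β) * rexp (γ^2/β) : ℝ) : ℂ)
      = ((Real.sqrt (π/β) : ℝ):ℂ) * ((∑' n, f n) - ((rexp (γ^2/β):ℝ):ℂ)) := by
    rw [Complex.ofReal_sub, Complex.ofReal_mul, hΘ]
    ring
  calc |S - Real.sqrt (π/β) * rexp (γ^2/β)|
      = ‖((S - Real.sqrt (π/β) * rexp (γ^2/β) : ℝ):ℂ)‖ := by
        rw [Complex.norm_real, Real.norm_eq_abs]
    _ = Real.sqrt (π/β) * ‖(∑' n, f n) - ((rexp (γ^2/β):ℝ):ℂ)‖ := by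
        rw [hdiff, norm_mul, Complex.norm_real, Real.norm_eq_abs,
          _root_.abs_of_nonneg (Real.sqrt_nonneg _)]
    _ ≤ Real.sqrt (π/β) * (rexp (γ^2/β) * (2 * (r * (1-r)⁻¹))) :=
        mul_le_mul_of_nonneg_left hbound (Real.sqrt_nonneg _)
    _ = _ := by ring

set_option maxHeartbeats 1000000 in
lemma main_est (c : ℝ) (hc : 0 < c) (α : ℝ) (hα : 0 < α) :
    |α ^ ((3:ℝ)/2) / (c * Real.sqrt π) * rexp (-(c^2)/α) *
        (∑' p : ℤ, (p:ℝ) * rexp (-α * (p:ℝ)^2 + 2*c*(p:ℝ))) - 1|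
      ≤ (2 * (rexp (-(π^2)/α) * (1 - rexp (-(π^2)/α))⁻¹))
        + Real.sqrt 2 * Real.sqrt α / c *
          (1 + 2 * (rexp (-(π^2)/(α/2)) * (1 - rexp (-(π^2)/(α/2)))⁻¹)) := by
  have hsα : 0 < Real.sqrt α := Real.sqrt_pos.mpr hα
  have hsπ : 0 < Real.sqrt π := Real.sqrt_pos.mpr pi_pos
  have hss : Real.sqrt α * Real.sqrt α = α := Real.mul_self_sqrt hα.le
  set t : ℤ → ℝ := fun p => rexp (-α * (p:ℝ)^2 + 2*c*(p:ℝ)) with htdef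
  have htpos : ∀ p, 0 < t p := fun p => Real.exp_pos _
  set μ : ℝ := c/α with hμdef
  have hμpos : 0 < μ := div_pos hc hα
  set K : ℝ := α ^ ((3:ℝ)/2) / (c * Real.sqrt π) * rexp (-(c^2)/α) with hKdef
  have hK : K = α * Real.sqrt α / (c * Real.sqrt π) * rexp (-(c^2)/α) := by
    rw [hKdef, show (3:ℝ)/2 = 1 + 1/2 by norm_num, Real.rpow_add hα, Real.rpow_one,
      ← Real.sqrt_eq_rpow]
  have hKpos : 0 < K := by rw [hK]; positivity
  set Dbα : ℝ := 2 * (rexp (-(π^2)/α) * (1 - rexp (-(π^2)/α))⁻¹) with hDbαdef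
  set Dbh : ℝ := 2 * (rexp (-(π^2)/(α/2)) * (1 - rexp (-(π^2)/(α/2)))⁻¹) with hDbhdef
  have hDbh0 : 0 ≤ Dbh := by
    rw [hDbhdef]
    have : rexp (-(π^2)/(α/2)) < 1 := Real.exp_lt_one_iff.mpr
      (div_neg_of_neg_of_pos (neg_neg_iff_pos.mpr (by positivity)) (half_pos hα))
    have h2 : (0:ℝ) < 1 - rexp (-(π^2)/(α/2)) := by linarith
    positivity
  set M : ℝ := Real.sqrt (π/α) * rexp (c^2/α) with hMdef
  have hMpos : 0 < M := by rw [hMdef]; positivity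
  set S0 : ℝ := ∑' p : ℤ, t p with hS0def
  set A : ℝ := ∑' p : ℤ, ((p:ℝ) - μ) * t p with hAdef
  set S' : ℝ := ∑' p : ℤ, rexp (-(α/2) * (p:ℝ)^2 + 2*(c/2)*(p:ℝ)) with hS'def
  set C1 : ℝ := (Real.sqrt α)⁻¹ * rexp (c^2/(2*α)) with hC1def
  have hC1pos : 0 < C1 := by rw [hC1def]; positivity
  set M' : ℝ := Real.sqrt (π/(α/2)) * rexp ((c/2)^2/(α/2)) with hM'def
  have hM'pos : 0 < M' := by rw [hM'def]; positivity
  have s0 : Summable t := summable_gauss α c hα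
  have s' : Summable (fun p : ℤ => rexp (-(α/2) * (p:ℝ)^2 + 2*(c/2)*(p:ℝ))) :=
    summable_gauss (α/2) (c/2) (half_pos hα)
  -- core pointwise inequality
  have hcore : ∀ x : ℝ, |x| * rexp (-α * x^2) ≤ (Real.sqrt α)⁻¹ * rexp (-(α/2) * x^2) := by
    intro x
    have hy : Real.sqrt α * |x| ≤ rexp ((α/2) * x^2) := by
      have h3 : (Real.sqrt α * |x|)^2 / 2 = (α/2) * x^2 := by
        rw [mul_pow, Real.sq_sqrt hα.le, _root_.sq_abs]; ring
      have h2 : Real.sqrt α * |x| ≤ (α/2) * x^2 + 1 := by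
        nlinarith [sq_nonneg (Real.sqrt α * |x| - 1)]
      calc Real.sqrt α * |x| ≤ (α/2)*x^2 + 1 := h2
        _ ≤ rexp ((α/2)*x^2) := Real.add_one_le_exp _
    have h1 : |x| * rexp (-(α/2) * x^2) ≤ (Real.sqrt α)⁻¹ := by
      have he : rexp (-(α/2)*x^2) = (rexp ((α/2)*x^2))⁻¹ := by
        rw [← Real.exp_neg]; congr 1; ring
      rw [he, ← div_eq_mul_inv, ← one_div, div_le_div_iff₀ (Real.exp_pos _) hsα]
      nlinarith [hy]
    have he2 : rexp (-α*x^2) = rexp (-(α/2)*x^2) * rexp (-(α/2)*x^2) := by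
      rw [← Real.exp_add]; congr 1; ring
    calc |x| * rexp (-α * x^2) = (|x| * rexp (-(α/2)*x^2)) * rexp (-(α/2)*x^2) := by
          rw [he2]; ring
      _ ≤ (Real.sqrt α)⁻¹ * rexp (-(α/2) * x^2) :=
          mul_le_mul_of_nonneg_right h1 (Real.exp_pos _).le
  have hptb : ∀ p : ℤ, |(p:ℝ) - μ| * t p
      ≤ C1 * rexp (-(α/2)*(p:ℝ)^2 + 2*(c/2)*(p:ℝ)) := by
    intro p
    have ht : t p = rexp (-α * ((p:ℝ) - μ)^2) * rexp (c^2/α) := by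
      rw [htdef]; dsimp only
      rw [← Real.exp_add]; congr 1
      rw [hμdef]; field_simp; ring
    have h2 : rexp (-(α/2) * ((p:ℝ)-μ)^2) * rexp (c^2/α)
        = rexp (c^2/(2*α)) * rexp (-(α/2)*(p:ℝ)^2 + 2*(c/2)*(p:ℝ)) := by
      rw [← Real.exp_add, ← Real.exp_add]; congr 1
      rw [hμdef]; field_simp; ring
    calc |(p:ℝ) - μ| * t p
        = (|(p:ℝ)-μ| * rexp (-α * ((p:ℝ)-μ)^2)) * rexp (c^2/α) := by rw [ht]; ring
      _ ≤ ((Real.sqrt α)⁻¹ * rexp (-(α/2)*((p:ℝ)-μ)^2)) * rexp (c^2/α) :=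
          mul_le_mul_of_nonneg_right (hcore _) (Real.exp_pos _).le
      _ = C1 * rexp (-(α/2)*(p:ℝ)^2 + 2*(c/2)*(p:ℝ)) := by
          rw [hC1def, mul_assoc, h2]; ring
  have sA : Summable (fun p : ℤ => ((p:ℝ) - μ) * t p) := by
    refine Summable.of_norm_bounded (s'.mul_left C1) fun p => ?_
    rw [Real.norm_eq_abs, abs_mul, abs_of_pos (htpos p)]
    exact hptb p
  have s1 : Summable (fun p : ℤ => (p:ℝ) * t p) := by
    refine (sA.add (s0.mul_left μ)).congr fun p => ?_
    ring
  have hT : (∑' p:ℤ, (p:ℝ) * t p) = A + μ * S0 := by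
    rw [hAdef, hS0def]
    calc ∑' p:ℤ, (p:ℝ)*t p = ∑' p:ℤ, (((p:ℝ)-μ)*t p + μ*t p) := tsum_congr fun p => by ring
      _ = (∑' p:ℤ, ((p:ℝ)-μ)*t p) + ∑' p:ℤ, μ * t p := Summable.tsum_add sA (s0.mul_left μ)
      _ = (∑' p:ℤ, ((p:ℝ)-μ)*t p) + μ * ∑' p:ℤ, t p := by rw [tsum_mul_left]
  have hA : |A| ≤ C1 * S' := by
    have habs : Summable fun p:ℤ => |((p:ℝ)-μ) * t p| := sA.abs
    calc |A| ≤ ∑' p:ℤ, |((p:ℝ)-μ)*t p| := by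
          rw [hAdef, ← Real.norm_eq_abs]
          exact (norm_tsum_le_tsum_norm (by simpa only [Real.norm_eq_abs] using habs)).trans
            (le_of_eq (tsum_congr fun p => Real.norm_eq_abs _))
      _ ≤ ∑' p:ℤ, C1 * rexp (-(α/2)*(p:ℝ)^2 + 2*(c/2)*(p:ℝ)) := by
          refine Summable.tsum_le_tsum (fun p => ?_) habs (s'.mul_left C1)
          rw [abs_mul, abs_of_pos (htpos p)]
          exact hptb p
      _ = C1 * S' := by rw [hS'def, tsum_mul_left]
  have hS'le : S' ≤ M' * (1 + Dbh) := by
    have h := (abs_le.mp (gauss_est (α/2) (c/2) (half_pos hα))).2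
    rw [← hS'def, ← hM'def, ← hDbhdef] at h
    have e : M' * (1 + Dbh) = M' + M' * Dbh := by ring
    linarith
  have hS0est : |S0 - M| ≤ M * Dbα := by
    have h := gauss_est α c hα
    rw [← hS0def, ← hMdef, ← hDbαdef] at h
    exact h
  -- exponential identities
  have hee : rexp (-(c^2)/α) * rexp (c^2/α) = 1 := by
    rw [← Real.exp_add, ← Real.exp_zero]; congr 1; ring
  have hee2 : rexp (-(c^2)/α) * (rexp (c^2/(2*α)) * rexp (c^2/(2*α))) = 1 := by
    rw [← Real.exp_add, ← Real.exp_add, ← Real.exp_zero]; congr 1; field_simp; ring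
  have hKμM : K * μ * M = 1 := by
    rw [hK, hμdef, hMdef, Real.sqrt_div pi_pos.le α]
    calc α * Real.sqrt α / (c * Real.sqrt π) * rexp (-(c^2)/α) * (c/α)
          * (Real.sqrt π / Real.sqrt α * rexp (c^2/α))
        = (α * Real.sqrt α / (c * Real.sqrt π) * (c/α) * (Real.sqrt π / Real.sqrt α))
          * (rexp (-(c^2)/α) * rexp (c^2/α)) := by ring
      _ = (α * Real.sqrt α / (c * Real.sqrt π) * (c/α) * (Real.sqrt π / Real.sqrt α)) := by
          rw [hee, mul_one]
      _ = 1 := by field_simp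
  have hsqrt2 : Real.sqrt (π/(α/2)) = Real.sqrt π * Real.sqrt 2 / Real.sqrt α := by
    rw [Real.sqrt_div pi_pos.le, Real.sqrt_div hα.le]
    field_simp
  have hcc : (c/2)^2/(α/2) = c^2/(2*α) := by field_simp
  have hKA : K * (C1 * M') = Real.sqrt 2 * Real.sqrt α / c := by
    rw [hK, hC1def, hM'def, hsqrt2, hcc]
    calc α * Real.sqrt α / (c * Real.sqrt π) * rexp (-(c^2)/α) *
          ((Real.sqrt α)⁻¹ * rexp (c^2/(2*α)) *
            (Real.sqrt π * Real.sqrt 2 / Real.sqrt α * rexp (c^2/(2*α))))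
        = (α * Real.sqrt α / (c * Real.sqrt π) * (Real.sqrt α)⁻¹ *
            (Real.sqrt π * Real.sqrt 2 / Real.sqrt α))
          * (rexp (-(c^2)/α) * (rexp (c^2/(2*α)) * rexp (c^2/(2*α)))) := by ring
      _ = α * Real.sqrt α / (c * Real.sqrt π) * (Real.sqrt α)⁻¹ *
            (Real.sqrt π * Real.sqrt 2 / Real.sqrt α) := by rw [hee2, mul_one]
      _ = Real.sqrt 2 * Real.sqrt α / c := by
          field_simp
          linear_combination (-1 : ℝ) * hss
  -- final assembly
  have hsplit : K * (∑' p:ℤ, (p:ℝ) * t p) - 1 = K * A + K * μ * (S0 - M) := by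
    rw [hT]; linear_combination hKμM
  show |K * (∑' p:ℤ, (p:ℝ) * t p) - 1| ≤ Dbα + Real.sqrt 2 * Real.sqrt α / c * (1 + Dbh)
  rw [hsplit]
  calc |K * A + K * μ * (S0 - M)| ≤ |K * A| + |K * μ * (S0 - M)| := abs_add_le _ _
    _ = K * |A| + K * μ * |S0 - M| := by
        rw [abs_mul K A, abs_mul (K*μ) (S0-M), _root_.abs_of_pos hKpos,
          _root_.abs_of_pos (mul_pos hKpos hμpos), mul_assoc]
    _ ≤ K * (C1 * (M' * (1 + Dbh))) + K * μ * (M * Dbα) := by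
        have h1 : K * |A| ≤ K * (C1 * (M' * (1 + Dbh))) := by
          refine mul_le_mul_of_nonneg_left (hA.trans ?_) hKpos.le
          exact mul_le_mul_of_nonneg_left hS'le hC1pos.le
        have h2 : K * μ * |S0 - M| ≤ K * μ * (M * Dbα) :=
          mul_le_mul_of_nonneg_left hS0est (by positivity)
        linarith
    _ = Dbα + Real.sqrt 2 * Real.sqrt α / c * (1 + Dbh) := by
        have e1 : K * (C1 * (M' * (1 + Dbh))) = (K * (C1 * M')) * (1 + Dbh) := by ring
        have e2 : K * μ * (M * Dbα) = (K * μ * M) * Dbα := by ring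
        rw [e1, e2, hKA, hKμM]; ring

lemma stmt1' (c : ℝ) (hc : 0 < c) :
    Tendsto (fun α : ℝ =>
      α ^ ((3 : ℝ) / 2) / (c * Real.sqrt Real.pi) * Real.exp (-(c ^ 2) / α) *
        ∑' p : ℤ, (p : ℝ) * Real.exp (-α * (p : ℝ) ^ 2 + 2 * c * (p : ℝ)))
      (nhdsWithin 0 (Set.Ioi 0)) (nhds 1) := by
  rw [← tendsto_sub_nhds_zero_iff]
  have hDb : Tendsto (fun β : ℝ => 2 * (rexp (-(π^2)/β) * (1 - rexp (-(π^2)/β))⁻¹))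
      (nhdsWithin (0:ℝ) (Set.Ioi 0)) (nhds 0) := by
    have h1 : Tendsto (fun β : ℝ => rexp (-(π^2)/β)) (nhdsWithin (0:ℝ) (Set.Ioi 0)) (nhds 0) := by
      apply Real.tendsto_exp_atBot.comp
      have h2 : Tendsto (fun β : ℝ => (π^2) * β⁻¹) (nhdsWithin (0:ℝ) (Set.Ioi 0)) atTop :=
        tendsto_inv_nhdsGT_zero.const_mul_atTop (by positivity)
      have h3 : Tendsto (fun β : ℝ => -((π^2) * β⁻¹)) (nhdsWithin (0:ℝ) (Set.Ioi 0)) atBot :=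
        tendsto_neg_atBot_iff.mpr h2
      exact h3.congr fun β => by ring
    have h4 := (h1.mul (((tendsto_const_nhds (x := (1:ℝ))).sub h1).inv₀ (by norm_num))).const_mul (2:ℝ)
    simpa using h4
  have hhalf : Tendsto (fun α : ℝ => α/2) (nhdsWithin (0:ℝ) (Set.Ioi 0))
      (nhdsWithin (0:ℝ) (Set.Ioi 0)) := by
    apply tendsto_nhdsWithin_of_tendsto_nhds_of_eventually_within
    · have := (continuous_id.div_const (2:ℝ)).tendsto (0:ℝ)
      simpa using this.mono_left nhdsWithin_le_nhds
    · filter_upwards [self_mem_nhdsWithin] with x hx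
      exact Set.mem_Ioi.mpr (half_pos hx)
  have hsq : Tendsto (fun α : ℝ => Real.sqrt α) (nhdsWithin (0:ℝ) (Set.Ioi 0)) (nhds 0) := by
    have := (Real.continuous_sqrt.tendsto 0).mono_left
      (nhdsWithin_le_nhds (s := Set.Ioi (0:ℝ)))
    simpa using this
  have hg : Tendsto (fun α : ℝ => (2 * (rexp (-(π^2)/α) * (1 - rexp (-(π^2)/α))⁻¹))
      + Real.sqrt 2 * Real.sqrt α / c *
        (1 + 2 * (rexp (-(π^2)/(α/2)) * (1 - rexp (-(π^2)/(α/2)))⁻¹)))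
      (nhdsWithin (0:ℝ) (Set.Ioi 0)) (nhds 0) := by
    have h5 := (hsq.const_mul (Real.sqrt 2)).div_const c
    have h6 := hDb.comp hhalf
    have h7 := h5.mul (h6.const_add (1:ℝ))
    have h8 := hDb.add h7
    simpa using h8
  apply squeeze_zero_norm' ?_ hg
  filter_upwards [self_mem_nhdsWithin] with α hα
  rw [Real.norm_eq_abs]
  exact main_est c hc α hα

end AuxGaussLemmas

/-- For fixed `c > 0`, as `α → 0⁺`,
`∑_{p ∈ ℤ} p · e^{-αp² + 2cp} ~ (c/α)·√(π/α)·e^{c²/α}`, i.e.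
`(α^{3/2}/(c√π))·e^{-c²/α} · ∑_{p ∈ ℤ} p·e^{-αp²+2cp} → 1`. -/
theorem stmt1 (c : ℝ) (hc : 0 < c) :
    Tendsto (fun α : ℝ =>
      α ^ ((3 : ℝ) / 2) / (c * Real.sqrt Real.pi) * Real.exp (-(c ^ 2) / α) *
        ∑' p : ℤ, (p : ℝ) * Real.exp (-α * (p : ℝ) ^ 2 + 2 * c * (p : ℝ)))
      (nhdsWithin 0 (Set.Ioi 0)) (nhds 1) := by
  exact stmt1' c hc
end

section
/- For p = (p₁,p₂,p₃,p₄) ∈ ℤ⁴ write |p|² = p₁²+p₂²+p₃²+p₄², σ(p) = p₁+p₂+p₃+p₄, and τ(p) = ∑_{1≤i<j≤4} p_i p_j. Then lim_{α→0⁺} α³ · ∑_{p∈ℤ⁴} τ(p) · e^{-α(|p|² + σ(p)²)} = −3π²/(5√5). -/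
open Filter MeasureTheory Real Set

noncomputable def fA : (Fin 4 → ℝ) → ℝ := fun x =>
  (∑ i : Fin 4, ∑ j : Fin 4, if i < j then x i * x j else 0) *
    Real.exp (-((∑ i, x i ^ 2) + (∑ i, x i) ^ 2))

lemma tau_eval (x : Fin 4 → ℝ) :
    (∑ i : Fin 4, ∑ j : Fin 4, if i < j then x i * x j else 0) =
      x 0 * x 1 + x 0 * x 2 + x 0 * x 3 + x 1 * x 2 + x 1 * x 3 + x 2 * x 3 := by
  simp only [Fin.sum_univ_four]
  have h01 : ((0:Fin 4) < 1) = True := by decide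
  have h02 : ((0:Fin 4) < 2) = True := by decide
  have h03 : ((0:Fin 4) < 3) = True := by decide
  have h12 : ((1:Fin 4) < 2) = True := by decide
  have h13 : ((1:Fin 4) < 3) = True := by decide
  have h23 : ((2:Fin 4) < 3) = True := by decide
  have h10 : ((1:Fin 4) < 0) = False := by decide
  have h20 : ((2:Fin 4) < 0) = False := by decide
  have h30 : ((3:Fin 4) < 0) = False := by decide
  have h21 : ((2:Fin 4) < 1) = False := by decide
  have h31 : ((3:Fin 4) < 1) = False := by decide
  have h32 : ((3:Fin 4) < 2) = False := by decide
  have h00 : ((0:Fin 4) < 0) = False := by decide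
  have h11 : ((1:Fin 4) < 1) = False := by decide
  have h22 : ((2:Fin 4) < 2) = False := by decide
  have h33 : ((3:Fin 4) < 3) = False := by decide
  simp only [h01, h02, h03, h12, h13, h23, h10, h20, h30, h21, h31, h32, h00, h11, h22, h33,
    if_true, if_false]
  ring

lemma fA_eval (x : Fin 4 → ℝ) :
    fA x = (x 0 * x 1 + x 0 * x 2 + x 0 * x 3 + x 1 * x 2 + x 1 * x 3 + x 2 * x 3) *
      Real.exp (-((x 0 ^ 2 + x 1 ^ 2 + x 2 ^ 2 + x 3 ^ 2) + (x 0 + x 1 + x 2 + x 3) ^ 2)) := by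
  simp only [fA]
  rw [tau_eval, Fin.sum_univ_four, Fin.sum_univ_four]

lemma fA_cont : Continuous fA := by
  apply Continuous.mul
  · exact continuous_finset_sum _ fun i _ => continuous_finset_sum _ fun j _ => by
      split_ifs
      · exact (continuous_apply i).mul (continuous_apply j)
      · exact continuous_const
  · apply Real.continuous_exp.comp
    fun_prop

lemma fA_bound (y : Fin 4 → ℝ) : |fA y| ≤ 3 * Real.exp (-(∑ i, y i ^ 2) / 2) := by
  rw [fA_eval]
  set a := y 0; set b := y 1; set c := y 2; set d := y 3
  have ht : (∑ i, y i ^ 2) = a ^ 2 + b ^ 2 + c ^ 2 + d ^ 2 := by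
    simp [Fin.sum_univ_four]
    rfl
  rw [ht]
  set t : ℝ := a ^ 2 + b ^ 2 + c ^ 2 + d ^ 2 with htdef
  have ht0 : 0 ≤ t := by positivity
  have hτ : |a * b + a * c + a * d + b * c + b * d + c * d| ≤ 3 / 2 * t := by
    rw [abs_le]
    constructor <;> nlinarith [sq_nonneg (a+b), sq_nonneg (a-b), sq_nonneg (a+c), sq_nonneg (a-c),
      sq_nonneg (a+d), sq_nonneg (a-d), sq_nonneg (b+c), sq_nonneg (b-c), sq_nonneg (b+d),
      sq_nonneg (b-d), sq_nonneg (c+d), sq_nonneg (c-d)]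
  have hexp1 : Real.exp (-(t + (a + b + c + d) ^ 2)) ≤ Real.exp (-t) := by
    apply Real.exp_le_exp.mpr; nlinarith [sq_nonneg (a + b + c + d)]
  have hsplit : Real.exp (-t) = Real.exp (-t / 2) * Real.exp (-t / 2) := by
    rw [← Real.exp_add]; ring_nf
  have hkey : t * Real.exp (-t / 2) ≤ 2 := by
    have h1 : t / 2 + 1 ≤ Real.exp (t / 2) := Real.add_one_le_exp _
    have h2 : Real.exp (-t / 2) * Real.exp (t / 2) = 1 := by
      rw [← Real.exp_add]; ring_nf; exact Real.exp_zero
    nlinarith [Real.exp_pos (-t / 2), Real.exp_pos (t / 2)]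
  rw [abs_mul, Real.abs_exp]
  calc |a * b + a * c + a * d + b * c + b * d + c * d| *
        Real.exp (-(t + (a + b + c + d) ^ 2))
      ≤ (3 / 2 * t) * Real.exp (-t) := by
        apply mul_le_mul hτ hexp1 (Real.exp_pos _).le (by positivity)
    _ ≤ 3 * Real.exp (-t / 2) := by
        rw [hsplit]
        nlinarith [Real.exp_pos (-t / 2), hkey, ht0]

noncomputable def cube (h : ℝ) (p : Fin 4 → ℤ) : Set (Fin 4 → ℝ) :=
  Set.univ.pi fun i => Set.Ico (h * p i) (h * (p i + 1))

lemma mem_cube_iff {h : ℝ} (h0 : 0 < h) {p : Fin 4 → ℤ} {x : Fin 4 → ℝ} :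
    x ∈ cube h p ↔ ∀ i, ⌊x i / h⌋ = p i := by
  simp only [cube, Set.mem_pi, Set.mem_univ, forall_true_left, Set.mem_Ico]
  refine forall_congr' fun i => ?_
  rw [Int.floor_eq_iff]
  constructor
  · rintro ⟨h1, h2⟩
    exact ⟨(le_div_iff₀ h0).mpr (by linarith), by rw [div_lt_iff₀ h0]; push_cast; linarith⟩
  · rintro ⟨h1, h2⟩
    refine ⟨?_, ?_⟩
    · have := (le_div_iff₀ h0).mp h1; linarith
    · have := (div_lt_iff₀ h0).mp h2; push_cast at this ⊢; linarith

lemma cube_meas (h : ℝ) (p : Fin 4 → ℤ) : MeasurableSet (cube h p) :=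
  MeasurableSet.univ_pi fun _ => measurableSet_Ico

lemma cube_vol {h : ℝ} (h0 : 0 < h) (p : Fin 4 → ℤ) :
    (volume (cube h p)).toReal = h ^ 4 := by
  rw [cube, volume_pi_pi]
  simp only [Real.volume_Ico]
  have : ∀ i : Fin 4, h * ((p i : ℝ) + 1) - h * (p i : ℝ) = h := fun i => by ring
  simp_rw [this]
  rw [Finset.prod_const]
  simp [ENNReal.toReal_pow, ENNReal.toReal_ofReal h0.le, Finset.card_univ]

lemma cube_disj {h : ℝ} (h0 : 0 < h) : Pairwise (Function.onFun Disjoint (cube h)) := by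
  intro p q hpq
  rw [Function.onFun, Set.disjoint_left]
  intro x hxp hxq
  exact hpq (funext fun i => ((mem_cube_iff h0).mp hxp i).symm.trans ((mem_cube_iff h0).mp hxq i))

lemma cube_cover {h : ℝ} (h0 : 0 < h) : (⋃ p, cube h p) = Set.univ := by
  refine Set.eq_univ_of_forall fun x => Set.mem_iUnion.mpr ⟨fun i => ⌊x i / h⌋, ?_⟩
  exact (mem_cube_iff h0).mpr fun i => rfl

lemma step_meas {h : ℝ} (h0 : 0 < h) :
    Measurable fun x : Fin 4 → ℝ => fA fun i => h * (⌊x i / h⌋ : ℝ) := by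
  apply fA_cont.measurable.comp
  refine measurable_pi_lambda _ fun i => Measurable.const_mul ?_ h
  exact Measurable.comp (measurable_of_countable _) (Measurable.floor (by fun_prop : Measurable fun x : Fin 4 → ℝ => x i / h))

lemma coord_lb {h x : ℝ} (h0 : 0 < h) (h1 : h ≤ 1) :
    x ^ 2 / 2 - 1 ≤ (h * (⌊x / h⌋ : ℝ)) ^ 2 := by
  set y := h * (⌊x / h⌋ : ℝ) with hy
  have hy1 : y ≤ x := by
    rw [hy]
    have := Int.floor_le (x / h)
    calc h * (⌊x / h⌋ : ℝ) ≤ h * (x / h) := by nlinarith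
    _ = x := by field_simp
  have hy2 : x - h < y := by
    have := Int.lt_floor_add_one (x / h)
    have h2 : x / h < (⌊x / h⌋ : ℝ) + 1 := this
    nlinarith [(div_lt_iff₀ h0).mp h2]
  have habs : |x| ≤ |y| + 1 := by
    have h3 : |x - y| ≤ 1 := abs_le.mpr ⟨by linarith, by linarith⟩
    calc |x| = |y + (x - y)| := by ring_nf
    _ ≤ |y| + |x - y| := abs_add_le _ _
    _ ≤ |y| + 1 := by linarith
  nlinarith [sq_abs x, sq_abs y, sq_nonneg (|y| - 1), abs_nonneg y, abs_nonneg x]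

lemma step_bound {h : ℝ} (h0 : 0 < h) (h1 : h ≤ 1) (x : Fin 4 → ℝ) :
    |fA fun i => h * (⌊x i / h⌋ : ℝ)| ≤ 3 * Real.exp 2 * Real.exp (-(∑ i, x i ^ 2) / 4) := by
  refine (fA_bound _).trans ?_
  rw [mul_assoc, ← Real.exp_add]
  apply mul_le_mul_of_nonneg_left _ (by norm_num)
  apply Real.exp_le_exp.mpr
  have hs : (∑ i, x i ^ 2) / 2 - 4 ≤ ∑ i, (h * (⌊x i / h⌋ : ℝ)) ^ 2 := by
    simp only [Fin.sum_univ_four]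
    have := fun i : Fin 4 => coord_lb (x := x i) h0 h1
    linarith [this 0, this 1, this 2, this 3]
  linarith

lemma bound_integrable :
    Integrable (fun x : Fin 4 → ℝ => 3 * Real.exp 2 * Real.exp (-(∑ i, x i ^ 2) / 4)) := by
  apply Integrable.const_mul
  have : (fun x : Fin 4 → ℝ => Real.exp (-(∑ i, x i ^ 2) / 4)) =
      fun x : Fin 4 → ℝ => ∏ i, Real.exp (-(1/4 : ℝ) * (x i) ^ 2) := by
    funext x
    rw [← Real.exp_sum]
    congr 1
    rw [neg_div, Finset.sum_div, ← Finset.sum_neg_distrib]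
    exact Finset.sum_congr rfl fun i _ => by ring
  rw [this]
  exact Integrable.fintype_prod fun _ => integrable_exp_neg_mul_sq (by norm_num)

lemma step_integrable {h : ℝ} (h0 : 0 < h) (h1 : h ≤ 1) :
    Integrable (fun x : Fin 4 → ℝ => fA fun i => h * (⌊x i / h⌋ : ℝ)) := by
  refine Integrable.mono' bound_integrable (step_meas h0).aestronglyMeasurable ?_
  exact Filter.Eventually.of_forall fun x => by
    rw [Real.norm_eq_abs]; exact step_bound h0 h1 x

lemma step_eq {h : ℝ} (h0 : 0 < h) (h1 : h ≤ 1) :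
    ∫ x : Fin 4 → ℝ, fA (fun i => h * (⌊x i / h⌋ : ℝ)) =
      h ^ 4 * ∑' p : Fin 4 → ℤ, fA (fun i => h * (p i : ℝ)) := by
  have key : ∫ x : Fin 4 → ℝ, fA (fun i => h * (⌊x i / h⌋ : ℝ)) =
      ∑' p : Fin 4 → ℤ, ∫ x in cube h p, fA (fun i => h * (⌊x i / h⌋ : ℝ)) := by
    rw [← setIntegral_univ, ← cube_cover h0]
    exact integral_iUnion (fun p => cube_meas h p) (cube_disj h0)
      ((step_integrable h0 h1).integrableOn)
  rw [key]
  rw [← tsum_mul_left]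
  congr 1
  funext p
  have : ∫ x in cube h p, fA (fun i => h * (⌊x i / h⌋ : ℝ)) =
      ∫ _ in cube h p, fA (fun i => h * (p i : ℝ)) := by
    apply setIntegral_congr_fun (cube_meas h p)
    intro x hx
    show fA _ = fA _
    congr 1
    funext i
    rw [(mem_cube_iff h0).mp hx i]
  rw [this, setIntegral_const, measureReal_def, cube_vol h0, smul_eq_mul]

lemma gauss0 {b : ℝ} (hb : 0 < b) :
    ∫ x : ℝ, Real.exp (-b * x ^ 2) = Real.sqrt π / Real.sqrt b := by
  rw [integral_gaussian, Real.sqrt_div pi_pos.le]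

lemma integrable_sq_gauss {b : ℝ} (hb : 0 < b) :
    Integrable fun x : ℝ => x ^ 2 * Real.exp (-b * x ^ 2) := by
  have := integrable_rpow_mul_exp_neg_mul_sq hb (by norm_num : (-1 : ℝ) < 2)
  have h2 : ∀ x : ℝ, x ^ (2 : ℝ) = x ^ (2 : ℕ) := fun x => by
    rw [show (2 : ℝ) = ((2 : ℕ) : ℝ) by norm_num, Real.rpow_natCast]
  simpa only [h2] using this

lemma gauss2 {b : ℝ} (hb : 0 < b) :
    ∫ x : ℝ, x ^ 2 * Real.exp (-b * x ^ 2) = Real.sqrt π / (2 * b * Real.sqrt b) := by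
  have h1 : (fun x : ℝ => x ^ 2 * Real.exp (-b * x ^ 2)) =
      fun x : ℝ => |x| ^ 2 * Real.exp (-b * |x| ^ 2) := by
    funext x; rw [sq_abs]
  rw [h1, integral_comp_abs (f := fun t : ℝ => t ^ 2 * Real.exp (-b * t ^ 2))]
  have h2 : ∫ x in Ioi (0:ℝ), x ^ 2 * Real.exp (-b * x ^ 2) =
      ∫ x in Ioi (0:ℝ), x ^ (2:ℝ) * Real.exp (-b * x ^ (2:ℝ)) := by
    refine setIntegral_congr_fun measurableSet_Ioi fun x hx => ?_
    rw [show (2 : ℝ) = ((2 : ℕ) : ℝ) by norm_num, Real.rpow_natCast]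
  rw [h2, integral_rpow_mul_exp_neg_mul_rpow two_pos (by norm_num) hb]
  have h3 : (-(2 + 1) / 2 : ℝ) = -(3 / 2 : ℝ) := by norm_num
  have h4 : ((2 + 1) / 2 : ℝ) = 1 / 2 + 1 := by norm_num
  rw [h3, h4, Real.Gamma_add_one (by norm_num), Real.Gamma_one_half_eq]
  rw [Real.rpow_neg hb.le, show (3 / 2 : ℝ) = 1 + 1 / 2 by norm_num, Real.rpow_add hb,
    Real.rpow_one, ← Real.sqrt_eq_rpow]
  have hsb : Real.sqrt b ≠ 0 := ne_of_gt (Real.sqrt_pos.mpr hb)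
  field_simp

noncomputable def M : Matrix (Fin 4) (Fin 4) ℝ :=
  !![1/2, 1/2, 1/2, 1/2;
     1/2, -(1/2), 1/2, -(1/2);
     1/2, 1/2, -(1/2), -(1/2);
     1/2, -(1/2), -(1/2), 1/2]

lemma detM : M.det = 1 := by
  simp [M, Matrix.det_succ_row_zero, Fin.sum_univ_succ, Fin.succAbove_of_le_castSucc,
    Fin.succAbove_of_castSucc_lt]
  norm_num

lemma mapM : Measure.map (Matrix.toLin' M) (volume : Measure (Fin 4 → ℝ)) = volume := by
  rw [Real.map_linearMap_volume_pi_eq_smul_volume_pi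
    (by rw [LinearMap.det_toLin', detM]; norm_num)]
  rw [LinearMap.det_toLin', detM]
  norm_num

lemma M_eval : M = !![1/2, 1/2, 1/2, 1/2;
     1/2, -(1/2), 1/2, -(1/2);
     1/2, 1/2, -(1/2), -(1/2);
     1/2, -(1/2), -(1/2), 1/2] := rfl

noncomputable def cc : Fin 4 → ℝ := ![5, 1, 1, 1]

lemma cc_pos : ∀ i, 0 < cc i := by
  intro i; fin_cases i <;> norm_num [cc]

noncomputable def g (k i : Fin 4) (t : ℝ) : ℝ :=
  (if i = k then t ^ 2 else 1) * Real.exp (-(cc i) * t ^ 2)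

lemma g_integrable (k i : Fin 4) : Integrable (g k i) := by
  unfold g
  by_cases h : i = k
  · subst h
    simpa using integrable_sq_gauss (cc_pos i)
  · simpa [if_neg h] using integrable_exp_neg_mul_sq (cc_pos i)

lemma P_integrable (k : Fin 4) : Integrable (fun y : Fin 4 → ℝ => ∏ i, g k i (y i)) :=
  Integrable.fintype_prod fun i => g_integrable k i

lemma fin4_decide :
    (((1:Fin 4) = 0) = False) ∧ (((2:Fin 4) = 0) = False) ∧ (((3:Fin 4) = 0) = False) ∧
    (((0:Fin 4) = 1) = False) ∧ (((2:Fin 4) = 1) = False) ∧ (((3:Fin 4) = 1) = False) ∧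
    (((0:Fin 4) = 2) = False) ∧ (((1:Fin 4) = 2) = False) ∧ (((3:Fin 4) = 2) = False) ∧
    (((0:Fin 4) = 3) = False) ∧ (((1:Fin 4) = 3) = False) ∧ (((2:Fin 4) = 3) = False) := by
  refine ⟨?_, ?_, ?_, ?_, ?_, ?_, ?_, ?_, ?_, ?_, ?_, ?_⟩ <;> simp

lemma fA_comp' (y : Fin 4 → ℝ) :
    fA (Matrix.toLin' M y) =
      ((3 * y 0 ^ 2 - y 1 ^ 2 - y 2 ^ 2 - y 3 ^ 2) / 2) *
        Real.exp (-(5 * y 0 ^ 2) + -y 1 ^ 2 + -y 2 ^ 2 + -y 3 ^ 2) := by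
  have h0 : Matrix.toLin' M y 0 = (y 0 + y 1 + y 2 + y 3) / 2 := by
    simp [Matrix.toLin'_apply, Matrix.mulVec, dotProduct, M_eval, Fin.sum_univ_four]
    ring
  have h1 : Matrix.toLin' M y 1 = (y 0 - y 1 + y 2 - y 3) / 2 := by
    simp [Matrix.toLin'_apply, Matrix.mulVec, dotProduct, M_eval, Fin.sum_univ_four]
    ring
  have h2 : Matrix.toLin' M y 2 = (y 0 + y 1 - y 2 - y 3) / 2 := by
    simp [Matrix.toLin'_apply, Matrix.mulVec, dotProduct, M_eval, Fin.sum_univ_four]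
    ring
  have h3 : Matrix.toLin' M y 3 = (y 0 - y 1 - y 2 + y 3) / 2 := by
    simp [Matrix.toLin'_apply, Matrix.mulVec, dotProduct, M_eval, Fin.sum_univ_four]
    ring
  rw [fA_eval, h0, h1, h2, h3]
  congr 1
  · ring
  · congr 1
    ring

lemma fA_comp (y : Fin 4 → ℝ) :
    fA (Matrix.toLin' M y) =
      (3/2) * ∏ i, g 0 i (y i) - (1/2) * ∏ i, g 1 i (y i)
        - (1/2) * ∏ i, g 2 i (y i) - (1/2) * ∏ i, g 3 i (y i) := by
  obtain ⟨e10, e20, e30, e01, e21, e31, e02, e12, e32, e03, e13, e23⟩ := fin4_decide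
  rw [fA_comp', Real.exp_add, Real.exp_add, Real.exp_add]
  simp only [g, Fin.prod_univ_four, e10, e20, e30, e01, e21, e31, e02, e12, e32, e03, e13, e23,
    if_true, if_false, if_pos rfl, one_mul]
  norm_num [cc, Matrix.cons_val_two, Matrix.cons_val_three]
  ring

lemma int_fA : ∫ x : Fin 4 → ℝ, fA x = -(3 * π ^ 2) / (5 * Real.sqrt 5) := by
  have hL : Measurable (Matrix.toLin' M : (Fin 4 → ℝ) →ₗ[ℝ] (Fin 4 → ℝ)) :=
    (LinearMap.continuous_of_finiteDimensional _).measurable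
  have step1 : ∫ x : Fin 4 → ℝ, fA x = ∫ y, fA (Matrix.toLin' M y) := by
    calc ∫ x : Fin 4 → ℝ, fA x
        = ∫ y, fA y ∂(Measure.map (Matrix.toLin' M) volume) := by rw [mapM]
      _ = ∫ y, fA (Matrix.toLin' M y) :=
          integral_map hL.aemeasurable fA_cont.aestronglyMeasurable
  rw [step1]
  have step2 : ∫ y : Fin 4 → ℝ, fA (Matrix.toLin' M y) =
      (3/2) * (∫ y : Fin 4 → ℝ, ∏ i, g 0 i (y i))
        - (1/2) * (∫ y : Fin 4 → ℝ, ∏ i, g 1 i (y i))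
        - (1/2) * (∫ y : Fin 4 → ℝ, ∏ i, g 2 i (y i))
        - (1/2) * (∫ y : Fin 4 → ℝ, ∏ i, g 3 i (y i)) := by
    have I0 : Integrable (fun y : Fin 4 → ℝ => (3/2 : ℝ) * ∏ i, g 0 i (y i)) :=
      (P_integrable 0).const_mul _
    have I1 : Integrable (fun y : Fin 4 → ℝ => (1/2 : ℝ) * ∏ i, g 1 i (y i)) :=
      (P_integrable 1).const_mul _
    have I2 : Integrable (fun y : Fin 4 → ℝ => (1/2 : ℝ) * ∏ i, g 2 i (y i)) :=
      (P_integrable 2).const_mul _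
    have I3 : Integrable (fun y : Fin 4 → ℝ => (1/2 : ℝ) * ∏ i, g 3 i (y i)) :=
      (P_integrable 3).const_mul _
    have I01 : Integrable (fun y : Fin 4 → ℝ =>
        (3/2 : ℝ) * ∏ i, g 0 i (y i) - (1/2 : ℝ) * ∏ i, g 1 i (y i)) := I0.sub I1
    have I012 : Integrable (fun y : Fin 4 → ℝ =>
        (3/2 : ℝ) * ∏ i, g 0 i (y i) - (1/2 : ℝ) * ∏ i, g 1 i (y i)
          - (1/2 : ℝ) * ∏ i, g 2 i (y i)) := I01.sub I2
    simp_rw [fA_comp]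
    rw [integral_sub I012 I3, integral_sub I01 I2, integral_sub I0 I1,
      integral_const_mul, integral_const_mul, integral_const_mul, integral_const_mul]
  rw [step2]
  have hP : ∀ k : Fin 4, (∫ y : Fin 4 → ℝ, ∏ i, g k i (y i)) = ∏ i, ∫ t : ℝ, g k i t :=
    fun k => MeasureTheory.integral_fintype_prod_eq_prod (g k)
  have hg_eval : ∀ k i : Fin 4, (∫ t : ℝ, g k i t) =
      if i = k then Real.sqrt π / (2 * cc i * Real.sqrt (cc i))
      else Real.sqrt π / Real.sqrt (cc i) := by
    intro k i
    unfold g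
    by_cases h : i = k
    · subst h
      simp only [if_pos rfl]
      exact gauss2 (cc_pos i)
    · simp only [if_neg h, one_mul]
      exact gauss0 (cc_pos i)
  obtain ⟨e10, e20, e30, e01, e21, e31, e02, e12, e32, e03, e13, e23⟩ := fin4_decide
  rw [hP 0, hP 1, hP 2, hP 3]
  simp only [hg_eval, Fin.prod_univ_four, e10, e20, e30, e01, e21, e31, e02, e12, e32, e03, e13,
    e23, if_true, if_false, if_pos rfl]
  norm_num [cc, Real.sqrt_one, Matrix.cons_val_two, Matrix.cons_val_three]
  have hsp : Real.sqrt π ^ 2 = π := Real.sq_sqrt pi_pos.le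
  have h5pos : (0:ℝ) < Real.sqrt 5 := Real.sqrt_pos.mpr (by norm_num)
  set sp := Real.sqrt π with hspdef
  set s5 := Real.sqrt 5 with hs5def
  rw [← hsp]
  field_simp
  ring

lemma floor_bounds {h x : ℝ} (h0 : 0 < h) :
    h * (⌊x / h⌋ : ℝ) ≤ x ∧ x - h < h * (⌊x / h⌋ : ℝ) := by
  constructor
  · have := Int.floor_le (x / h)
    calc h * (⌊x / h⌋ : ℝ) ≤ h * (x / h) := by nlinarith
    _ = x := by field_simp
  · have h2 : x / h < (⌊x / h⌋ : ℝ) + 1 := Int.lt_floor_add_one (x / h)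
    nlinarith [(div_lt_iff₀ h0).mp h2]

lemma scale_id (h α a b c d : ℝ) (hh : h ^ 2 = α) :
    ((h * a) * (h * b) + (h * a) * (h * c) + (h * a) * (h * d) + (h * b) * (h * c) +
        (h * b) * (h * d) + (h * c) * (h * d)) *
      Real.exp (-(((h * a) ^ 2 + (h * b) ^ 2 + (h * c) ^ 2 + (h * d) ^ 2) +
        (h * a + h * b + h * c + h * d) ^ 2)) =
    α * ((a * b + a * c + a * d + b * c + b * d + c * d) *
      Real.exp (-α * ((a ^ 2 + b ^ 2 + c ^ 2 + d ^ 2) + (a + b + c + d) ^ 2))) := by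
  subst hh
  have e : -(((h * a) ^ 2 + (h * b) ^ 2 + (h * c) ^ 2 + (h * d) ^ 2) +
        (h * a + h * b + h * c + h * d) ^ 2) =
      -h ^ 2 * ((a ^ 2 + b ^ 2 + c ^ 2 + d ^ 2) + (a + b + c + d) ^ 2) := by ring
  rw [e]
  ring

lemma eventual_eq {α : ℝ} (hα : α ∈ Ioc (0:ℝ) 1) :
    ∫ x : Fin 4 → ℝ, fA (fun i => Real.sqrt α * (⌊x i / Real.sqrt α⌋ : ℝ)) =
      α ^ 3 * ∑' p : Fin 4 → ℤ,
        (∑ i : Fin 4, ∑ j : Fin 4, if i < j then (p i : ℝ) * (p j : ℝ) else 0) *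
          Real.exp (-α * ((∑ i, (p i : ℝ) ^ 2) + (∑ i, (p i : ℝ)) ^ 2)) := by
  have h0 : 0 < Real.sqrt α := Real.sqrt_pos.mpr hα.1
  have h1 : Real.sqrt α ≤ 1 := Real.sqrt_le_one.mpr hα.2
  have hh : Real.sqrt α ^ 2 = α := Real.sq_sqrt hα.1.le
  rw [step_eq h0 h1]
  have hterm : ∀ p : Fin 4 → ℤ,
      fA (fun i => Real.sqrt α * (p i : ℝ)) = α *
        ((∑ i : Fin 4, ∑ j : Fin 4, if i < j then (p i : ℝ) * (p j : ℝ) else 0) *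
          Real.exp (-α * ((∑ i, (p i : ℝ) ^ 2) + (∑ i, (p i : ℝ)) ^ 2))) := by
    intro p
    rw [fA_eval, tau_eval (fun i => (p i : ℝ)), Fin.sum_univ_four, Fin.sum_univ_four]
    exact scale_id _ α _ _ _ _ hh
  rw [tsum_congr hterm, tsum_mul_left]
  have h4 : Real.sqrt α ^ 4 = α ^ 2 := by
    calc Real.sqrt α ^ 4 = (Real.sqrt α ^ 2) ^ 2 := by ring
    _ = α ^ 2 := by rw [hh]
  rw [h4]
  ring

lemma main_tendsto :
    Tendsto (fun α : ℝ =>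
        ∫ x : Fin 4 → ℝ, fA (fun i => Real.sqrt α * (⌊x i / Real.sqrt α⌋ : ℝ)))
      (nhdsWithin 0 (Set.Ioi 0)) (nhds (∫ x : Fin 4 → ℝ, fA x)) := by
  apply tendsto_integral_filter_of_dominated_convergence
    (bound := fun x : Fin 4 → ℝ => 3 * Real.exp 2 * Real.exp (-(∑ i, x i ^ 2) / 4))
  · filter_upwards [Ioc_mem_nhdsGT (zero_lt_one (α := ℝ))] with α hα
    exact (step_meas (Real.sqrt_pos.mpr hα.1)).aestronglyMeasurable
  · filter_upwards [Ioc_mem_nhdsGT (zero_lt_one (α := ℝ))] with α hα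
    refine Filter.Eventually.of_forall fun x => ?_
    rw [Real.norm_eq_abs]
    exact step_bound (Real.sqrt_pos.mpr hα.1) (Real.sqrt_le_one.mpr hα.2) x
  · exact bound_integrable
  · refine Filter.Eventually.of_forall fun x => ?_
    have hinner : Tendsto (fun α : ℝ => fun i => Real.sqrt α * (⌊x i / Real.sqrt α⌋ : ℝ))
        (nhdsWithin 0 (Set.Ioi 0)) (nhds x) := by
      rw [tendsto_pi_nhds]
      intro i
      have hs : Tendsto (fun α : ℝ => Real.sqrt α) (nhdsWithin 0 (Set.Ioi 0)) (nhds 0) := by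
        have := Real.continuous_sqrt.tendsto 0
        rw [Real.sqrt_zero] at this
        exact this.mono_left nhdsWithin_le_nhds
      rw [← tendsto_sub_nhds_zero_iff]
      apply squeeze_zero_norm' ?_ hs
      filter_upwards [self_mem_nhdsWithin] with α (hα : α ∈ Ioi (0:ℝ))
      have h0 : 0 < Real.sqrt α := Real.sqrt_pos.mpr hα
      obtain ⟨hle, hgt⟩ := floor_bounds (x := x i) h0
      rw [Real.norm_eq_abs]
      exact abs_le.mpr ⟨by linarith, by linarith⟩
    exact (fA_cont.tendsto x).comp hinner

/-- With `τ(p) = ∑_{i<j} p_i p_j`,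
`lim_{α→0⁺} α³ · ∑_{p∈ℤ⁴} τ(p) · e^{-α(|p|² + σ(p)²)} = −3π²/(5√5)`. -/
theorem stmt7 :
    Tendsto (fun α : ℝ =>
      α ^ 3 * ∑' p : Fin 4 → ℤ,
        (∑ i : Fin 4, ∑ j : Fin 4, if i < j then (p i : ℝ) * (p j : ℝ) else 0) *
          Real.exp (-α * ((∑ i, (p i : ℝ) ^ 2) + (∑ i, (p i : ℝ)) ^ 2)))
      (nhdsWithin 0 (Set.Ioi 0)) (nhds (-(3 * Real.pi ^ 2) / (5 * Real.sqrt 5))) := by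
  have h1 := main_tendsto
  rw [int_fA] at h1
  apply h1.congr'
  filter_upwards [Ioc_mem_nhdsGT (zero_lt_one (α := ℝ))] with α hα
  exact eventual_eq hα
end

section
/- For p = (p₁,p₂,p₃,p₄) ∈ ℤ⁴ write |p|² = p₁²+p₂²+p₃²+p₄² and σ(p) = p₁+p₂+p₃+p₄. Then lim_{α→0⁺} α³ · ∑_{p∈ℤ⁴} σ(p)² · e^{-α(|p|² + σ(p)²)} = 2π²/(5√5). -/
open Filter

open Real MeasureTheory Topology Matrix

lemma integrable_sq_gaussian {b : ℝ} (hb : 0 < b) :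
    Integrable (fun x : ℝ => x ^ 2 * Real.exp (-b * x ^ 2)) := by
  have h := integrable_rpow_mul_exp_neg_mul_sq hb (s := 2) (by norm_num)
  have e : ∀ x : ℝ, x ^ (2 : ℝ) = x ^ 2 := fun x => by
    rw [show (2:ℝ) = ((2:ℕ):ℝ) by norm_num, Real.rpow_natCast]
  simpa only [e] using h

lemma integral_sq_gaussian {b : ℝ} (hb : 0 < b) :
    ∫ x : ℝ, x ^ 2 * Real.exp (-b * x ^ 2) = Real.sqrt (π / b) / (2 * b) := by
  have hint2 := integrable_sq_gaussian hb
  have hint1 := integrable_exp_neg_mul_sq hb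
  have hderiv : ∀ x : ℝ, HasDerivAt (fun x : ℝ => x * Real.exp (-b * x ^ 2))
      (Real.exp (-b * x ^ 2) - 2 * b * (x ^ 2 * Real.exp (-b * x ^ 2))) x := by
    intro x
    have h1 : HasDerivAt (fun x : ℝ => -b * x ^ 2) (-b * (2 * x ^ 1)) x :=
      (hasDerivAt_pow 2 x).const_mul (-b)
    have h2 := h1.exp
    have h3 := (hasDerivAt_id x).fun_mul h2
    refine h3.congr_deriv ?_
    simp only [id_eq]
    ring
  have hf' : Integrable (fun x : ℝ =>
      Real.exp (-b * x ^ 2) - 2 * b * (x ^ 2 * Real.exp (-b * x ^ 2))) :=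
    hint1.sub (hint2.const_mul (2 * b))
  have htop : Tendsto (fun x : ℝ => x * Real.exp (-b * x ^ 2)) atTop (𝓝 0) := by
    have hA := (rpow_mul_exp_neg_mul_sq_isLittleO_exp_neg hb 1).isBigO
    have h2 : Tendsto (fun x : ℝ => Real.exp (-(1/2) * x)) atTop (𝓝 0) := by
      apply Real.tendsto_exp_atBot.comp
      have : Tendsto (fun x : ℝ => (1/2 : ℝ) * x) atTop atTop :=
        Tendsto.const_mul_atTop (by norm_num) tendsto_id
      have h4 := tendsto_neg_atBot_iff.mpr this
      refine h4.congr fun x => by ring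
    have := hA.trans_tendsto h2
    refine this.congr fun x => by rw [Real.rpow_one]
  have hbot : Tendsto (fun x : ℝ => x * Real.exp (-b * x ^ 2)) atBot (𝓝 0) := by
    have h := (htop.neg).comp tendsto_neg_atBot_atTop
    simp only [Function.comp_def, neg_zero] at h
    refine h.congr fun x => ?_
    ring_nf
  have h0 := integral_of_hasDerivAt_of_tendsto hderiv hf' hbot htop
  rw [integral_sub hint1 (hint2.const_mul (2 * b)), MeasureTheory.integral_const_mul,
    integral_gaussian, sub_zero] at h0
  have h2b : (2 * b) ≠ 0 := by positivity
  field_simp at h0 ⊢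
  linarith

noncomputable def gg : (Fin 4 → ℝ) → ℝ := fun x =>
  (∑ i, x i) ^ 2 * Real.exp (-((∑ i, (x i) ^ 2) + (∑ i, x i) ^ 2))

lemma gg_cont : Continuous gg := by
  unfold gg
  have h1 : Continuous fun x : Fin 4 → ℝ => (∑ i, x i) :=
    continuous_finset_sum _ fun i _ => continuous_apply i
  have h2 : Continuous fun x : Fin 4 → ℝ => (∑ i, (x i) ^ 2) :=
    continuous_finset_sum _ fun i _ => (continuous_apply i).pow 2
  exact ((h1.pow 2).mul (((h2.add (h1.pow 2)).neg).rexp))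

lemma gg_nonneg (x : Fin 4 → ℝ) : 0 ≤ gg x :=
  mul_nonneg (sq_nonneg _) (Real.exp_pos _).le

lemma gg_le (z x : Fin 4 → ℝ) (hzx : ∀ i, |z i - x i| ≤ 1) :
    gg z ≤ Real.exp 8 * Real.exp (-(∑ i, (x i) ^ 2) / 2) := by
  have h1 : gg z = ((∑ i, z i) ^ 2 * Real.exp (-(∑ i, z i) ^ 2))
      * Real.exp (-(∑ i, (z i) ^ 2)) := by
    rw [gg, mul_assoc, ← Real.exp_add]
    congr 2
    ring
  have h2 : (∑ i, z i) ^ 2 * Real.exp (-(∑ i, z i) ^ 2) ≤ 1 := by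
    set t := (∑ i, z i) ^ 2 with ht
    have ht0 : 0 ≤ t := sq_nonneg _
    have hte : t ≤ Real.exp t := by
      have := Real.add_one_le_exp t; linarith
    calc t * Real.exp (-t) ≤ Real.exp t * Real.exp (-t) :=
          mul_le_mul_of_nonneg_right hte (Real.exp_pos _).le
      _ = 1 := by rw [← Real.exp_add]; simp
  have key : ∀ i, (x i) ^ 2 / 2 - 2 ≤ (z i) ^ 2 := by
    intro i
    obtain ⟨ha, hb⟩ := abs_le.mp (hzx i)
    nlinarith [sq_nonneg (z i - x i), sq_nonneg (z i + x i), sq_nonneg (x i - 2 * z i)]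
  have hsum : (∑ i, (x i) ^ 2) / 2 - 8 ≤ ∑ i, (z i) ^ 2 := by
    rw [Fin.sum_univ_four, Fin.sum_univ_four]
    have k0 := key 0; have k1 := key 1; have k2 := key 2; have k3 := key 3
    linarith
  have h3 : Real.exp (-(∑ i, (z i) ^ 2)) ≤ Real.exp 8 * Real.exp (-(∑ i, (x i) ^ 2) / 2) := by
    rw [← Real.exp_add, Real.exp_le_exp]
    linarith
  calc gg z ≤ 1 * Real.exp (-(∑ i, (z i) ^ 2)) := by
        rw [h1]; exact mul_le_mul_of_nonneg_right h2 (Real.exp_pos _).le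
    _ = Real.exp (-(∑ i, (z i) ^ 2)) := one_mul _
    _ ≤ _ := h3

noncomputable def Gb : (Fin 4 → ℝ) → ℝ := fun x =>
  Real.exp 8 * Real.exp (-(∑ i, (x i) ^ 2) / 2)

lemma Gb_integrable : Integrable Gb := by
  have h1 : Integrable (fun t : ℝ => Real.exp (-(1/2 : ℝ) * t ^ 2)) :=
    integrable_exp_neg_mul_sq (by norm_num)
  have h2 : Integrable (fun x : Fin 4 → ℝ => ∏ i, Real.exp (-(1/2 : ℝ) * (x i) ^ 2)) :=
    Integrable.fintype_prod (fun _ => h1)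
  have h3 := h2.const_mul (Real.exp 8)
  refine h3.congr (Filter.EventuallyEq.of_eq (funext fun x => ?_))
  rw [Gb, ← Real.exp_sum]
  congr 1
  rw [Fin.sum_univ_four, Fin.sum_univ_four]
  ring

lemma floor_approx {h : ℝ} (h0 : 0 < h) (t : ℝ) : |h * ⌊t / h⌋ - t| ≤ h := by
  have h1 : (⌊t/h⌋ : ℝ) ≤ t/h := Int.floor_le _
  have h2 : t/h < ⌊t/h⌋ + 1 := Int.lt_floor_add_one _
  have e : h * (t/h) = t := by field_simp
  rw [abs_le]
  constructor
  · nlinarith [mul_lt_mul_of_pos_left h2 h0]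
  · nlinarith [mul_le_mul_of_nonneg_left h1 h0.le]

lemma F_meas (h : ℝ) :
    Measurable (fun x : Fin 4 → ℝ => gg (fun i => h * ⌊x i / h⌋)) := by
  have minner : Measurable (fun (x : Fin 4 → ℝ) (i : Fin 4) => h * (⌊x i / h⌋ : ℝ)) := by
    apply measurable_pi_lambda
    intro i
    have c : Measurable (fun z : ℤ => (z : ℝ)) := measurable_from_top
    have m1 : Measurable (fun x : Fin 4 → ℝ => x i) := measurable_pi_apply i
    exact (c.comp (m1.div_const h).floor).const_mul h
  exact gg_cont.measurable.comp minner

lemma F_int {h : ℝ} (h0 : 0 < h) (h1 : h ≤ 1) :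
    Integrable (fun x : Fin 4 → ℝ => gg (fun i => h * ⌊x i / h⌋)) := by
  refine Integrable.mono' Gb_integrable (F_meas h).aestronglyMeasurable
    (Filter.Eventually.of_forall fun x => ?_)
  rw [Real.norm_eq_abs, abs_of_nonneg (gg_nonneg _)]
  exact gg_le _ x fun i => (floor_approx h0 (x i)).trans h1

lemma step {h : ℝ} (h0 : 0 < h) (h1 : h ≤ 1) :
    ∫ x : Fin 4 → ℝ, gg (fun i => h * ⌊x i / h⌋)
      = h ^ 4 * ∑' p : Fin 4 → ℤ, gg (fun i => h * (p i : ℝ)) := by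
  set ff : (Fin 4 → ℝ) → ℝ := fun y => gg (fun i => h * ⌊y i⌋) with hff
  have comp : ∀ x : Fin 4 → ℝ, gg (fun i => h * ⌊x i / h⌋) = ff (h⁻¹ • x) := by
    intro x
    simp only [hff, Pi.smul_apply, smul_eq_mul, div_eq_inv_mul]
  have hsub : ∫ x : Fin 4 → ℝ, gg (fun i => h * ⌊x i / h⌋) = h ^ 4 * ∫ y, ff y := by
    simp_rw [comp]
    rw [MeasureTheory.Measure.integral_comp_inv_smul volume ff h]
    rw [Module.finrank_fintype_fun_eq_card, Fintype.card_fin, smul_eq_mul,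
      abs_of_pos (pow_pos h0 4)]
  have hffint : Integrable ff := by
    have h2 := (F_int h0 h1).comp_smul (ne_of_gt h0)
    refine h2.congr (Filter.Eventually.of_forall fun y => ?_)
    show gg (fun i => h * ⌊(h • y) i / h⌋) = ff y
    rw [comp (h • y), smul_smul, inv_mul_cancel₀ (ne_of_gt h0), one_smul]
  set s : (Fin 4 → ℤ) → Set (Fin 4 → ℝ) :=
    fun p => Set.univ.pi fun i => Set.Ico (p i : ℝ) (p i + 1) with hs
  have hmem : ∀ (p : Fin 4 → ℤ) (y : Fin 4 → ℝ), y ∈ s p ↔ ∀ i, ⌊y i⌋ = p i := by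
    intro p y
    simp only [hs, Set.mem_pi, Set.mem_univ, forall_true_left, Set.mem_Ico]
    exact forall_congr' fun i => (Int.floor_eq_iff).symm
  have hmeas_s : ∀ p, MeasurableSet (s p) :=
    fun p => MeasurableSet.univ_pi fun i => measurableSet_Ico
  have hdisj : Pairwise (Function.onFun Disjoint s) := by
    intro p q hpq
    rw [Function.onFun, Set.disjoint_left]
    intro y hyp hyq
    apply hpq
    funext i
    rw [← (hmem p y).mp hyp i, (hmem q y).mp hyq i]
  have hunion : (⋃ p, s p) = Set.univ := by
    ext y
    simp only [Set.mem_iUnion, Set.mem_univ, iff_true]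
    exact ⟨fun i => ⌊y i⌋, (hmem _ y).mpr fun i => rfl⟩
  have hvol : ∀ p : Fin 4 → ℤ, volume (s p) = 1 := by
    intro p
    rw [hs]
    rw [volume_pi_pi]
    simp [Real.volume_Ico]
  have hmain : ∫ y, ff y = ∑' p : Fin 4 → ℤ, gg (fun i => h * (p i : ℝ)) := by
    calc ∫ y, ff y = ∫ y in ⋃ p, s p, ff y := by rw [hunion, setIntegral_univ]
      _ = ∑' p, ∫ y in s p, ff y :=
          integral_iUnion hmeas_s hdisj (hunion ▸ hffint.integrableOn)
      _ = ∑' p : Fin 4 → ℤ, gg (fun i => h * (p i : ℝ)) := by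
          refine tsum_congr fun p => ?_
          rw [setIntegral_congr_fun (hmeas_s p)
            (fun y hy => by
              show ff y = gg (fun i => h * (p i : ℝ))
              simp only [hff]
              congr 1
              funext i
              rw [(hmem p y).mp hy i])]
          rw [setIntegral_const, measureReal_def, hvol p]
          simp
  rw [hsub, hmain]

def MM : Matrix (Fin 4) (Fin 4) ℝ := !![1,1,1,1; -1,1,1,1; 0,-2,1,1; 0,0,-3,1]

lemma MM_det : MM.det = 24 := by
  simp [MM, Matrix.det_succ_row_zero, Fin.sum_univ_succ, Fin.succAbove]
  norm_num

lemma gg_comp (y : Fin 4 → ℝ) :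
    gg (Matrix.toLin' MM y) =
      16 * (y 3) ^ 2 *
        Real.exp (-(2 * (y 0) ^ 2 + 6 * (y 1) ^ 2 + 12 * (y 2) ^ 2 + 20 * (y 3) ^ 2)) := by
  have e1 : (∑ i, (Matrix.toLin' MM y) i) = 4 * y 3 := by
    simp [MM, Matrix.toLin'_apply, Matrix.mulVec, dotProduct, Fin.sum_univ_four, Matrix.vecHead, Matrix.vecTail]
    ring
  have e2 : (∑ i, ((Matrix.toLin' MM y) i) ^ 2) =
      2 * (y 0) ^ 2 + 6 * (y 1) ^ 2 + 12 * (y 2) ^ 2 + 4 * (y 3) ^ 2 := by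
    simp [MM, Matrix.toLin'_apply, Matrix.mulVec, dotProduct, Fin.sum_univ_four, Matrix.vecHead, Matrix.vecTail]
    ring
  rw [gg, e1, e2]
  rw [show 2 * (y 0) ^ 2 + 6 * (y 1) ^ 2 + 12 * (y 2) ^ 2 + 4 * (y 3) ^ 2 + (4 * y 3) ^ 2
      = 2 * (y 0) ^ 2 + 6 * (y 1) ^ 2 + 12 * (y 2) ^ 2 + 20 * (y 3) ^ 2 by ring]
  ring

noncomputable def FF : Fin 4 → ℝ → ℝ :=
  ![fun t => Real.exp (-(2:ℝ) * t ^ 2), fun t => Real.exp (-(6:ℝ) * t ^ 2),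
    fun t => Real.exp (-(12:ℝ) * t ^ 2), fun t => 16 * (t ^ 2 * Real.exp (-(20:ℝ) * t ^ 2))]

lemma prod_FF (y : Fin 4 → ℝ) :
    16 * (y 3) ^ 2 *
        Real.exp (-(2 * (y 0) ^ 2 + 6 * (y 1) ^ 2 + 12 * (y 2) ^ 2 + 20 * (y 3) ^ 2))
      = ∏ i, FF i (y i) := by
  rw [Fin.prod_univ_four]
  simp only [FF, Matrix.cons_val', Matrix.cons_val_zero, Matrix.cons_val_one, Matrix.head_cons,
    Matrix.vecHead, Matrix.vecTail, Matrix.cons_val_succ, Matrix.cons_val_two, Matrix.cons_val_three, Matrix.empty_val',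
    Matrix.cons_val_fin_one, Function.comp]
  rw [show ∀ a b c d : ℝ, Real.exp a * Real.exp b * Real.exp c * (16 * (y 3 ^ 2 * Real.exp d))
      = 16 * (y 3)^2 * Real.exp (a + b + c + d) from fun a b c d => by
        rw [Real.exp_add, Real.exp_add, Real.exp_add]; ring]
  congr 1
  ring

lemma integral_gg : ∫ x : Fin 4 → ℝ, gg x = 2 * π ^ 2 / (5 * Real.sqrt 5) := by
  have hdet : MM.det ≠ 0 := by rw [MM_det]; norm_num
  have hmeas : Measurable (Matrix.toLin' MM) :=
    (LinearMap.continuous_on_pi _).measurable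
  have h1 : ∫ x, gg x ∂(Measure.map (Matrix.toLin' MM) volume)
      = ∫ y : Fin 4 → ℝ, gg (Matrix.toLin' MM y) :=
    integral_map hmeas.aemeasurable gg_cont.aestronglyMeasurable
  rw [Real.map_matrix_volume_pi_eq_smul_volume_pi hdet, integral_smul_measure,
    ENNReal.toReal_ofReal (abs_nonneg _), MM_det] at h1
  have habs : |((24:ℝ))⁻¹| = (24:ℝ)⁻¹ := by norm_num
  rw [habs, smul_eq_mul] at h1
  have h2 : ∫ y : Fin 4 → ℝ, gg (Matrix.toLin' MM y) = ∏ i, ∫ t : ℝ, FF i t := by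
    rw [← MeasureTheory.integral_fintype_prod_eq_prod (ι := Fin 4) FF]
    congr 1
    funext y
    rw [gg_comp, prod_FF]
  have h3 : (∏ i, ∫ t : ℝ, FF i t) =
      Real.sqrt (π/2) * Real.sqrt (π/6) * Real.sqrt (π/12) *
        (16 * (Real.sqrt (π/20) / 40)) := by
    rw [Fin.prod_univ_four]
    have e0 : ∫ t : ℝ, FF 0 t = Real.sqrt (π/2) := by
      simp only [FF, Matrix.cons_val_zero]; exact integral_gaussian 2
    have e1 : ∫ t : ℝ, FF 1 t = Real.sqrt (π/6) := by
      simp only [FF, Matrix.cons_val_one, Matrix.head_cons]; exact integral_gaussian 6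
    have e2 : ∫ t : ℝ, FF 2 t = Real.sqrt (π/12) := by
      simp only [FF, Matrix.cons_val_two, Matrix.vecHead, Matrix.vecTail, Matrix.cons_val_one,
        Matrix.head_cons, Function.comp, Matrix.cons_val_succ, Matrix.cons_val_zero]
      exact integral_gaussian 12
    have e3 : ∫ t : ℝ, FF 3 t = 16 * (Real.sqrt (π/20) / 40) := by
      simp only [FF, Matrix.cons_val_three, Matrix.vecHead, Matrix.vecTail, Function.comp,
        Matrix.cons_val_succ, Matrix.cons_val_zero]
      rw [MeasureTheory.integral_const_mul, integral_sq_gaussian (by norm_num : (0:ℝ) < 20)]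
      norm_num
    rw [e0, e1, e2, e3]
  have key : Real.sqrt (π/2) * Real.sqrt (π/6) * Real.sqrt (π/12) * Real.sqrt (π/20)
      = π ^ 2 / (24 * Real.sqrt 5) := by
    rw [← Real.sqrt_mul (by positivity) (π/6), ← Real.sqrt_mul (by positivity) (π/12),
      ← Real.sqrt_mul (by positivity) (π/20)]
    have h5 : Real.sqrt 5 ^ 2 = 5 := Real.sq_sqrt (by norm_num)
    have h5pos : (0:ℝ) < Real.sqrt 5 := Real.sqrt_pos.mpr (by norm_num)
    rw [show π/2 * (π/6) * (π/12) * (π/20) = (π ^ 2 / (24 * Real.sqrt 5)) ^ 2 by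
      field_simp; nlinarith [h5, Real.pi_pos]]
    exact Real.sqrt_sq (by positivity)
  have h5pos : (0:ℝ) < Real.sqrt 5 := Real.sqrt_pos.mpr (by norm_num)
  have hre : Real.sqrt (π/2) * Real.sqrt (π/6) * Real.sqrt (π/12) * (16 * (Real.sqrt (π/20) / 40))
      = (16/40) * (π ^ 2 / (24 * Real.sqrt 5)) := by
    rw [← key]; ring
  have h4 : (24:ℝ)⁻¹ * (∫ x : Fin 4 → ℝ, gg x) = (16/40) * (π ^ 2 / (24 * Real.sqrt 5)) := by
    rw [h1, h2, h3, hre]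
  field_simp at h4 ⊢
  linarith

/-- `lim_{α→0⁺} α³ · ∑_{p∈ℤ⁴} σ(p)² · e^{-α(|p|² + σ(p)²)} = 2π²/(5√5)`. -/
theorem stmt10 :
    Tendsto (fun α : ℝ =>
      α ^ 3 * ∑' p : Fin 4 → ℤ,
        (∑ i, (p i : ℝ)) ^ 2 *
          Real.exp (-α * ((∑ i, (p i : ℝ) ^ 2) + (∑ i, (p i : ℝ)) ^ 2)))
      (nhdsWithin 0 (Set.Ioi 0)) (nhds (2 * Real.pi ^ 2 / (5 * Real.sqrt 5))) := by
  have hdct : Tendsto (fun α : ℝ => ∫ x : Fin 4 → ℝ, gg (fun i => √α * ⌊x i / √α⌋))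
      (𝓝[>] (0:ℝ)) (𝓝 (∫ x : Fin 4 → ℝ, gg x)) := by
    refine tendsto_integral_filter_of_dominated_convergence Gb ?_ ?_ Gb_integrable ?_
    · exact Filter.Eventually.of_forall fun α => (F_meas (√α)).aestronglyMeasurable
    · filter_upwards [Ioc_mem_nhdsGT (by norm_num : (0:ℝ) < 1)] with α hα
      refine Filter.Eventually.of_forall fun x => ?_
      have h0 : 0 < √α := Real.sqrt_pos.mpr hα.1
      have h1 : √α ≤ 1 := by
        rw [show (1:ℝ) = √1 by simp]
        exact Real.sqrt_le_sqrt hα.2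
      rw [Real.norm_eq_abs, abs_of_nonneg (gg_nonneg _)]
      exact gg_le _ x fun i => (floor_approx h0 (x i)).trans h1
    · refine Filter.Eventually.of_forall fun x => ?_
      have hcoord : ∀ i, Tendsto (fun α : ℝ => √α * ⌊x i / √α⌋) (𝓝[>] (0:ℝ)) (𝓝 (x i)) := by
        intro i
        have hs : Tendsto (fun α : ℝ => √α) (𝓝[>] (0:ℝ)) (𝓝 0) := by
          have h : Tendsto (fun α : ℝ => √α) (𝓝 0) (𝓝 0) := by
            simpa using Real.continuous_sqrt.tendsto 0
          exact h.mono_left nhdsWithin_le_nhds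
        have hz : Tendsto (fun α : ℝ => √α * ⌊x i / √α⌋ - x i) (𝓝[>] (0:ℝ)) (𝓝 0) := by
          apply squeeze_zero_norm' ?_ hs
          filter_upwards [self_mem_nhdsWithin] with α hα
          exact floor_approx (Real.sqrt_pos.mpr hα) (x i)
        have h2 := hz.add_const (x i)
        simpa using h2
      have hpi : Tendsto (fun α : ℝ => fun i => √α * ⌊x i / √α⌋) (𝓝[>] (0:ℝ)) (𝓝 x) :=
        tendsto_pi_nhds.mpr hcoord
      exact (gg_cont.tendsto x).comp hpi
  rw [integral_gg] at hdct
  refine hdct.congr' ?_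
  filter_upwards [Ioc_mem_nhdsGT (by norm_num : (0:ℝ) < 1)] with α hα
  have h0' : 0 < α := hα.1
  have h0 : 0 < √α := Real.sqrt_pos.mpr h0'
  have h1 : √α ≤ 1 := by
    rw [show (1:ℝ) = √1 by simp]
    exact Real.sqrt_le_sqrt hα.2
  have hsq : √α ^ 2 = α := Real.sq_sqrt h0'.le
  rw [step h0 h1]
  have hterm : ∀ p : Fin 4 → ℤ, gg (fun i => √α * (p i : ℝ)) =
      α * ((∑ i, (p i : ℝ)) ^ 2 *
        Real.exp (-α * ((∑ i, (p i : ℝ) ^ 2) + (∑ i, (p i : ℝ)) ^ 2))) := by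
    intro p
    rw [gg]
    have e1 : (∑ i, √α * (p i : ℝ)) = √α * ∑ i, (p i : ℝ) := by rw [Finset.mul_sum]
    have e2 : (∑ i, (√α * (p i : ℝ)) ^ 2) = α * ∑ i, (p i : ℝ) ^ 2 := by
      rw [Finset.mul_sum]
      exact Finset.sum_congr rfl fun i _ => by rw [mul_pow, hsq]
    simp only [e1, e2, mul_pow, hsq]
    have e3 : (∑ x : Fin 4, α * (p x : ℝ) ^ 2) = α * ∑ i, (p i : ℝ) ^ 2 :=
      (Finset.mul_sum _ _ _).symm
    rw [e3, show -(α * ∑ i, (p i : ℝ) ^ 2 + α * (∑ i, (p i : ℝ)) ^ 2)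
        = -α * ((∑ i, (p i : ℝ) ^ 2) + (∑ i, (p i : ℝ)) ^ 2) by ring]
    ring
  rw [tsum_congr hterm, tsum_mul_left]
  rw [show (√α) ^ 4 = ((√α) ^ 2) ^ 2 by ring, hsq]
  ring
end

section
/- Let m > 0. For p = (p₁,p₂,p₃,p₄) ∈ ℤ⁴ write |p|² = ∑_k p_k², σ(p) = ∑_k p_k, and χ(p) = |p|² + σ(p)² + m². Then lim_{Λ→∞} (1/log Λ) · ∑_{p∈ℤ⁴, ‖p‖₂≤Λ} 1/χ(p)² = 2π²/√5. -/
open Filter MeasureTheory Finset ENNReal NNReal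

noncomputable section Stmt17Aux
namespace Stmt17


/-- integer quadratic form -/
def Qz (p : Fin 4 → ℤ) : ℤ := (∑ i, (p i)^2) + (∑ i, p i)^2

/-- real quadratic form -/
def Qr (x : Fin 4 → ℝ) : ℝ := (∑ i, (x i)^2) + (∑ i, x i)^2

lemma Qz_nonneg (p : Fin 4 → ℤ) : 0 ≤ Qz p := by
  have : (0:ℤ) ≤ ∑ i, (p i)^2 := Finset.sum_nonneg fun i _ => sq_nonneg _
  have := sq_nonneg (∑ i, p i)
  unfold Qz; omega

lemma Qz_cast (p : Fin 4 → ℤ) : ((Qz p : ℤ) : ℝ) = Qr (fun i => (p i : ℝ)) := by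
  simp [Qz, Qr]

lemma abs_le_sq (a : ℤ) : |a| ≤ a^2 := by
  rcases eq_or_ne a 0 with h | h
  · simp [h]
  · have h1 : 1 ≤ |a| := Int.one_le_abs h
    calc |a| = 1 * |a| := (one_mul _).symm
    _ ≤ |a| * |a| := by exact mul_le_mul_of_nonneg_right h1 (abs_nonneg a)
    _ = a^2 := by rw [← abs_mul, sq, abs_mul_self]

lemma sum_sq_le_Qz (p : Fin 4 → ℤ) : (∑ i, (p i)^2) ≤ Qz p := by
  have := sq_nonneg (∑ i, p i); unfold Qz; omega

lemma Qz_le_five (p : Fin 4 → ℤ) : Qz p ≤ 5 * ∑ i, (p i)^2 := by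
  unfold Qz
  rw [Fin.sum_univ_four, Fin.sum_univ_four]
  nlinarith [sq_nonneg (p 0 - p 1), sq_nonneg (p 0 - p 2), sq_nonneg (p 0 - p 3),
    sq_nonneg (p 1 - p 2), sq_nonneg (p 1 - p 3), sq_nonneg (p 2 - p 3)]

/-- lattice points with `Qz p ≤ n` -/
def E (n : ℕ) : Finset (Fin 4 → ℤ) :=
  (Finset.Icc (fun _ => -(n:ℤ)) (fun _ => (n:ℤ))).filter (fun p => Qz p ≤ n)

lemma mem_E {n : ℕ} {p : Fin 4 → ℤ} : p ∈ E n ↔ Qz p ≤ n := by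
  constructor
  · intro h; exact (Finset.mem_filter.1 h).2
  · intro h
    refine Finset.mem_filter.2 ⟨?_, h⟩
    rw [Finset.mem_Icc]
    have hb : ∀ i, |p i| ≤ (n:ℤ) := by
      intro i
      calc |p i| ≤ (p i)^2 := abs_le_sq _
      _ ≤ ∑ j, (p j)^2 := Finset.single_le_sum (fun j _ => sq_nonneg (p j)) (Finset.mem_univ i)
      _ ≤ Qz p := sum_sq_le_Qz p
      _ ≤ n := h
    constructor
    · intro i; have := hb i; have := abs_le.1 this; exact this.1
    · intro i; exact (abs_le.1 (hb i)).2

lemma E_mono : Monotone E := by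
  intro a b hab p hp
  rw [mem_E] at *
  exact le_trans hp (by exact_mod_cast hab)



/-- linear embedding into ℝ⁵ realizing `Qr` as a squared Euclidean norm -/
def T : (Fin 4 → ℝ) →ₗ[ℝ] EuclideanSpace ℝ (Fin 5) where
  toFun x := WithLp.toLp 2 ![x 0, x 1, x 2, x 3, x 0 + x 1 + x 2 + x 3]
  map_add' x y := by
    ext j
    fin_cases j <;> simp [Matrix.cons_val_zero, Matrix.cons_val_one, Matrix.head_cons, Matrix.cons_val_fin_one] <;> ring
  map_smul' c x := by
    ext j
    fin_cases j <;> simp [Matrix.cons_val_zero, Matrix.cons_val_one, Matrix.head_cons, Matrix.cons_val_fin_one] <;> ring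

lemma norm_T_sq (x : Fin 4 → ℝ) : ‖T x‖^2 = Qr x := by
  rw [EuclideanSpace.norm_eq, Real.sq_sqrt (Finset.sum_nonneg fun i _ => sq_nonneg _)]
  show ∑ j : Fin 5, ‖(![x 0, x 1, x 2, x 3, x 0 + x 1 + x 2 + x 3] : Fin 5 → ℝ) j‖^2 = Qr x
  rw [Fin.sum_univ_five]
  simp [Qr, Fin.sum_univ_four, Real.norm_eq_abs, sq_abs]

lemma Qr_nonneg (x : Fin 4 → ℝ) : 0 ≤ Qr x := by
  rw [← norm_T_sq]; positivity

/-- `ν x = √(Qr x)` as a norm -/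
def nu (x : Fin 4 → ℝ) : ℝ := ‖T x‖

lemma nu_nonneg (x) : 0 ≤ nu x := norm_nonneg _
lemma nu_sq (x) : nu x ^ 2 = Qr x := norm_T_sq x
lemma nu_add_le (x y) : nu (x + y) ≤ nu x + nu y := by
  unfold nu; rw [map_add]; exact norm_add_le _ _
lemma nu_neg (x) : nu (-x) = nu x := by unfold nu; rw [map_neg, norm_neg]

lemma Qr_le_iff {x : Fin 4 → ℝ} {s : ℝ} (hs : 0 ≤ s) : Qr x ≤ s^2 ↔ nu x ≤ s := by
  rw [← nu_sq]
  constructor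
  · intro h; nlinarith [nu_nonneg x]
  · intro h; nlinarith [nu_nonneg x]

/-- unit half-open cube based at an integer point -/
def cube (p : Fin 4 → ℤ) : Set (Fin 4 → ℝ) :=
  Set.univ.pi fun i => Set.Ico (p i : ℝ) (p i + 1)

lemma volume_cube (p : Fin 4 → ℤ) : volume (cube p) = 1 := by
  rw [cube, volume_pi_pi]
  simp [Real.volume_Ico]

lemma measurable_cube (p : Fin 4 → ℤ) : MeasurableSet (cube p) :=
  MeasurableSet.univ_pi fun i => measurableSet_Ico

lemma cube_disjoint {p q : Fin 4 → ℤ} (h : p ≠ q) : Disjoint (cube p) (cube q) := by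
  rw [Set.disjoint_left]
  intro x hp hq
  apply h
  funext i
  have h1 := hp i (Set.mem_univ i)
  have h2 := hq i (Set.mem_univ i)
  simp only [Set.mem_Ico] at h1 h2
  have e1 : ⌊x i⌋ = p i := by
    rw [Int.floor_eq_iff] <;> simp_all <;> push_cast <;> simp_all
  have e2 : ⌊x i⌋ = q i := by
    rw [Int.floor_eq_iff] <;> simp_all <;> push_cast <;> simp_all
  omega

lemma mem_cube_floor (x : Fin 4 → ℝ) : x ∈ cube (fun i => ⌊x i⌋) := by
  intro i _
  exact ⟨Int.floor_le _, Int.lt_floor_add_one _⟩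

lemma nu_le_five_of_cube {y : Fin 4 → ℝ} (hy : ∀ i, |y i| ≤ 1) : nu y ≤ 5 := by
  have hQ : Qr y ≤ 25 := by
    have h0 := abs_le.1 (hy 0); have h1 := abs_le.1 (hy 1)
    have h2 := abs_le.1 (hy 2); have h3 := abs_le.1 (hy 3)
    unfold Qr
    rw [Fin.sum_univ_four, Fin.sum_univ_four]
    nlinarith [sq_nonneg (y 0), sq_nonneg (y 1), sq_nonneg (y 2), sq_nonneg (y 3)]
  nlinarith [nu_sq y, nu_nonneg y]

/-- the square-root matrix `A = I + c·J` with `c = (√5−1)/4`, so `AᵀA = I + J`. -/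
def cA : ℝ := (Real.sqrt 5 - 1) / 4

def Amat : Matrix (Fin 4) (Fin 4) ℝ :=
  1 + Matrix.replicateCol (Fin 1) (fun _ => cA) * Matrix.replicateRow (Fin 1) (fun _ => (1:ℝ))

lemma sqrt5_sq : Real.sqrt 5 ^ 2 = 5 := Real.sq_sqrt (by norm_num)

lemma cA_id : 2 * cA + 4 * cA^2 = 1 := by
  unfold cA
  have := sqrt5_sq
  nlinarith

lemma Amat_apply (i j : Fin 4) : Amat i j = (if i = j then (1:ℝ) else 0) + cA := by
  simp [Amat, Matrix.one_apply, Matrix.mul_apply, Matrix.replicateCol_apply, Matrix.replicateRow_apply]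

lemma det_Amat : Amat.det = Real.sqrt 5 := by
  rw [Amat]
  refine (Matrix.det_one_add_replicateCol_mul_replicateRow (ι := Fin 1) _ _).trans ?_
  simp [dotProduct, cA, Fin.sum_univ_four]
  ring

lemma mulVec_Amat (x : Fin 4 → ℝ) (i : Fin 4) :
    Amat.mulVec x i = x i + cA * ∑ j, x j := by
  simp only [Matrix.mulVec, dotProduct, Amat_apply]
  rw [Finset.sum_congr rfl (fun j _ => by split_ifs with h <;> ring :
    ∀ j ∈ Finset.univ, ((if i = j then (1:ℝ) else 0) + cA) * x j
      = (if i = j then x j else 0) + cA * x j)]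
  rw [Finset.sum_add_distrib, Finset.sum_ite_eq Finset.univ i x, ← Finset.mul_sum]
  simp

lemma Qr_eq_sum_sq_mulVec (x : Fin 4 → ℝ) :
    Qr x = ∑ i, (Amat.mulVec x i)^2 := by
  have h := cA_id
  simp only [mulVec_Amat]
  unfold Qr
  rw [Fin.sum_univ_four, Fin.sum_univ_four, Fin.sum_univ_four]
  nlinarith [sq_nonneg (x 0 + x 1 + x 2 + x 3)]

/-- the volume of the sublevel set of `Qr` -/
lemma volume_Qr_le {s : ℝ} (hs : 0 ≤ s) :
    volume {x : Fin 4 → ℝ | Qr x ≤ s^2}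
      = ENNReal.ofReal ((Real.sqrt 5)⁻¹ * (s^4 * (Real.pi^2 / 2))) := by
  have hdet : LinearMap.det (Matrix.toLin' Amat) = Real.sqrt 5 := by
    rw [LinearMap.det_toLin', det_Amat]
  have hset : {x : Fin 4 → ℝ | Qr x ≤ s^2}
      = (Matrix.toLin' Amat) ⁻¹' {y : Fin 4 → ℝ | ∑ i, (y i)^2 ≤ s^2} := by
    ext x
    simp only [Set.mem_setOf_eq, Set.mem_preimage, Matrix.toLin'_apply, Qr_eq_sum_sq_mulVec]
  have h5 : (0:ℝ) < Real.sqrt 5 := Real.sqrt_pos.2 (by norm_num)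
  rw [hset, MeasureTheory.Measure.addHaar_preimage_linearMap volume
    (by rw [hdet]; exact h5.ne') _]
  rw [hdet]
  -- compute the ball volume
  have hball : volume {y : Fin 4 → ℝ | ∑ i, (y i)^2 ≤ s^2}
      = ENNReal.ofReal (s^4 * (Real.pi^2 / 2)) := by
    have hmp := EuclideanSpace.volume_preserving_symm_measurableEquiv_toLp (Fin 4)
    have hpre : (MeasurableEquiv.toLp 2 (Fin 4 → ℝ)).symm ⁻¹' {y : Fin 4 → ℝ | ∑ i, (y i)^2 ≤ s^2}
        = Metric.closedBall (0 : EuclideanSpace ℝ (Fin 4)) s := by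
      ext z
      simp only [Set.mem_preimage, Set.mem_setOf_eq, Metric.mem_closedBall, dist_zero_right,
        EuclideanSpace.norm_eq]
      constructor
      · intro h
        rw [show s = Real.sqrt (s^2) from (Real.sqrt_sq hs).symm]
        apply Real.sqrt_le_sqrt
        convert h using 2 <;> simp [sq_abs]
      · intro h
        have h2 : Real.sqrt (∑ i, ‖z i‖^2) ^ 2 ≤ s^2 := by
          apply pow_le_pow_left₀ (Real.sqrt_nonneg _) h
        rw [Real.sq_sqrt (Finset.sum_nonneg fun i _ => sq_nonneg _)] at h2
        convert h2 using 2 <;> simp [sq_abs]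
    have hmeas : MeasurableSet {y : Fin 4 → ℝ | ∑ i, (y i)^2 ≤ s^2} := by
      apply measurableSet_le (by fun_prop) measurable_const
    rw [← hmp.measure_preimage hmeas.nullMeasurableSet, hpre,
      EuclideanSpace.volume_closedBall]
    have hg : Real.Gamma ((Fintype.card (Fin 4) : ℝ) / 2 + 1) = 2 := by
      rw [show ((Fintype.card (Fin 4) : ℝ) / 2 + 1) = (2:ℕ) + 1 by norm_num,
        Real.Gamma_nat_eq_factorial]
      norm_num
    rw [hg]
    rw [show Real.sqrt Real.pi ^ Fintype.card (Fin 4) = Real.pi ^ 2 by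
      rw [show Fintype.card (Fin 4) = 4 from rfl, show (4:ℕ) = 2*2 from rfl, pow_mul,
        Real.sq_sqrt Real.pi_pos.le]]
    rw [← ENNReal.ofReal_pow hs, ← ENNReal.ofReal_mul (by positivity)]
    norm_num
    try ring
  rw [hball, ← ENNReal.ofReal_mul (by positivity)]
  congr 1
  rw [abs_of_pos (by positivity)]

/-! ### Lattice point counting -/

def Ncard (t : ℕ) : ℕ := (E t).card

def V : ℝ := Real.pi^2 / (2 * Real.sqrt 5)

lemma V_pos : 0 < V := by
  have : (0:ℝ) < Real.sqrt 5 := Real.sqrt_pos.2 (by norm_num)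
  unfold V; positivity

lemma volume_Qr_le' {s : ℝ} (hs : 0 ≤ s) :
    volume {x : Fin 4 → ℝ | Qr x ≤ s^2} = ENNReal.ofReal (s^4 * V) := by
  rw [volume_Qr_le hs]
  congr 1
  unfold V
  rw [mul_comm (2:ℝ) (Real.sqrt 5), ← div_div, div_eq_mul_inv (Real.pi^2) (Real.sqrt 5), mul_comm (Real.pi^2)]
  ring

lemma volume_biUnion (t : ℕ) :
    volume (⋃ p ∈ E t, cube p) = (Ncard t : ℝ≥0∞) := by
  have hd : (↑(E t) : Set (Fin 4 → ℤ)).PairwiseDisjoint cube :=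
    fun p _ q _ hpq => cube_disjoint hpq
  rw [measure_biUnion_finset hd (fun p _ => measurable_cube p)]
  simp [volume_cube, Ncard]

lemma nu_intCast_le {p : Fin 4 → ℤ} {t : ℕ} (h : p ∈ E t) :
    nu (fun i => (p i : ℝ)) ≤ Real.sqrt t := by
  rw [← Qr_le_iff (Real.sqrt_nonneg _), Real.sq_sqrt (Nat.cast_nonneg t)]
  rw [← Qz_cast]
  exact_mod_cast mem_E.1 h

lemma biUnion_subset (t : ℕ) :
    (⋃ p ∈ E t, cube p) ⊆ {x : Fin 4 → ℝ | Qr x ≤ (Real.sqrt t + 5)^2} := by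
  intro x hx
  obtain ⟨p, hp, hxp⟩ := Set.mem_iUnion₂.1 hx
  have hnu : nu x ≤ Real.sqrt t + 5 := by
    have hx' : (fun i => (p i : ℝ)) + (x - fun i => (p i : ℝ)) = x := by
      funext i; simp
    calc nu x ≤ nu (fun i => (p i : ℝ)) + nu (x - fun i => (p i : ℝ)) := by
          conv_lhs => rw [← hx']
          exact nu_add_le _ _
    _ ≤ Real.sqrt t + 5 := by
        refine add_le_add (nu_intCast_le hp) (nu_le_five_of_cube fun i => ?_)
        have := hxp i (Set.mem_univ i)
        simp only [Set.mem_Ico] at this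
        rw [abs_le]
        constructor <;> simp only [Pi.sub_apply] <;> [linarith [this.1]; linarith [this.2]]
  rw [Set.mem_setOf_eq, Qr_le_iff (by positivity)]
  exact hnu

lemma subset_biUnion {t : ℕ} (ht : 0 ≤ Real.sqrt t - 5) :
    {x : Fin 4 → ℝ | Qr x ≤ (Real.sqrt t - 5)^2} ⊆
      (⋃ p ∈ E t, cube p) := by
  intro x hx
  rw [Set.mem_setOf_eq, Qr_le_iff ht] at hx
  set p : Fin 4 → ℤ := fun i => ⌊x i⌋ with hp
  have hmem : p ∈ E t := by
    rw [mem_E]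
    have h1 : nu (fun i => (p i : ℝ)) ≤ Real.sqrt t := by
      have hsplit : x + ((fun i => (p i : ℝ)) - x) = (fun i => (p i : ℝ)) := by
        funext i; simp
      calc nu (fun i => (p i : ℝ)) ≤ nu x + nu ((fun i => (p i : ℝ)) - x) := by
            conv_lhs => rw [← hsplit]
            exact nu_add_le _ _
      _ ≤ (Real.sqrt t - 5) + 5 := by
          refine add_le_add hx (nu_le_five_of_cube fun i => ?_)
          have h1 := Int.floor_le (x i)
          have h2 := Int.lt_floor_add_one (x i)
          rw [abs_le]
          constructor <;> simp only [Pi.sub_apply, hp] <;> [linarith; linarith]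
      _ = Real.sqrt t := by ring
    have h2 : Qr (fun i => (p i : ℝ)) ≤ t := by
      rw [← Real.sq_sqrt (Nat.cast_nonneg t), Qr_le_iff (Real.sqrt_nonneg _)]
      exact h1
    rw [← Qz_cast] at h2
    exact_mod_cast h2
  exact Set.mem_iUnion₂.2 ⟨p, hmem, mem_cube_floor x⟩

lemma Ncard_upper (t : ℕ) : (Ncard t : ℝ) ≤ (Real.sqrt t + 5)^4 * V := by
  have h : volume (⋃ p ∈ E t, cube p) ≤ volume {x : Fin 4 → ℝ | Qr x ≤ (Real.sqrt t + 5)^2} :=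
    measure_mono (biUnion_subset t)
  rw [volume_biUnion] at h
  rw [volume_Qr_le' (by positivity)] at h
  rw [show ((Ncard t : ℝ≥0∞)) = ENNReal.ofReal ((Ncard t : ℝ)) from
    (ENNReal.ofReal_natCast _).symm] at h
  exact (ENNReal.ofReal_le_ofReal_iff (mul_nonneg (by positivity) V_pos.le)).1 h

lemma Ncard_lower {t : ℕ} (ht : 0 ≤ Real.sqrt t - 5) :
    (Real.sqrt t - 5)^4 * V ≤ (Ncard t : ℝ) := by
  have h : volume {x : Fin 4 → ℝ | Qr x ≤ (Real.sqrt t - 5)^2} ≤ volume (⋃ p ∈ E t, cube p) :=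
    measure_mono (subset_biUnion ht)
  rw [volume_biUnion, volume_Qr_le' ht] at h
  rw [show ((Ncard t : ℝ≥0∞)) = ENNReal.ofReal ((Ncard t : ℝ)) from
    (ENNReal.ofReal_natCast _).symm] at h
  exact (ENNReal.ofReal_le_ofReal_iff (Nat.cast_nonneg _)).1 h

/-- main counting asymptotic -/
lemma tendsto_Ncard_div :
    Tendsto (fun t : ℕ => (Ncard t : ℝ) / (t:ℝ)^2) atTop (nhds V) := by
  have hsq : Tendsto (fun t : ℕ => 5 / Real.sqrt t) atTop (nhds 0) := by
    apply Tendsto.div_atTop tendsto_const_nhds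
    have hsqrt : Tendsto Real.sqrt atTop atTop := by
      apply tendsto_atTop_atTop.2
      intro b
      refine ⟨b^2, fun a ha => ?_⟩
      calc b ≤ |b| := le_abs_self b
      _ = Real.sqrt (b^2) := (Real.sqrt_sq_eq_abs b).symm
      _ ≤ Real.sqrt a := Real.sqrt_le_sqrt ha
    exact hsqrt.comp tendsto_natCast_atTop_atTop
  have hupper : Tendsto (fun t : ℕ => (1 + 5 / Real.sqrt t)^4 * V) atTop (nhds V) := by
    have : Tendsto (fun t : ℕ => (1 + 5 / Real.sqrt t)) atTop (nhds 1) := by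
      simpa using tendsto_const_nhds.add hsq
    simpa using (this.pow 4).mul_const V
  have hlower : Tendsto (fun t : ℕ => (1 - 5 / Real.sqrt t)^4 * V) atTop (nhds V) := by
    have : Tendsto (fun t : ℕ => (1 - 5 / Real.sqrt t)) atTop (nhds 1) := by
      simpa using tendsto_const_nhds.sub hsq
    simpa using (this.pow 4).mul_const V
  apply tendsto_of_tendsto_of_tendsto_of_le_of_le' hlower hupper
  · filter_upwards [eventually_ge_atTop 25] with t ht
    have htpos : (0:ℝ) < t := by positivity
    have hst : Real.sqrt 25 ≤ Real.sqrt t := Real.sqrt_le_sqrt (by exact_mod_cast ht)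
    have h25 : Real.sqrt 25 = 5 := by
      rw [show (25:ℝ) = 5^2 by norm_num, Real.sqrt_sq (by norm_num)]
    have hs5 : (5:ℝ) ≤ Real.sqrt t := h25 ▸ hst
    have hspos : (0:ℝ) < Real.sqrt t := by linarith
    have key : (1 - 5 / Real.sqrt t)^4 = (Real.sqrt t - 5)^4 / (t:ℝ)^2 := by
      have hts : ((t:ℝ))^2 = (Real.sqrt t)^4 := by
        rw [show (4:ℕ) = 2*2 from rfl, pow_mul, Real.sq_sqrt (Nat.cast_nonneg t)]
      rw [hts]
      field_simp
    rw [key, div_mul_eq_mul_div]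
    exact (div_le_div_iff_of_pos_right (by positivity)).2 (Ncard_lower (by linarith))
  · filter_upwards [eventually_ge_atTop 1] with t ht
    have htpos : (0:ℝ) < t := by exact_mod_cast Nat.pos_of_ne_zero (by omega)
    have hspos : (0:ℝ) < Real.sqrt t := Real.sqrt_pos.2 htpos
    have key : (1 + 5 / Real.sqrt t)^4 = (Real.sqrt t + 5)^4 / (t:ℝ)^2 := by
      have hts : ((t:ℝ))^2 = (Real.sqrt t)^4 := by
        rw [show (4:ℕ) = 2*2 from rfl, pow_mul, Real.sq_sqrt (Nat.cast_nonneg t)]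
      rw [hts]
      field_simp
    rw [key, div_mul_eq_mul_div]
    exact (div_le_div_iff_of_pos_right (by positivity)).2 (Ncard_upper t)

/-! ### Abel summation -/

section WithM

variable (m : ℝ)

/-- the summand as a function of the value of `Qz` -/
def g (k : ℕ) : ℝ := 1 / (((k:ℝ) + m^2))^2

/-- the summand -/
def f (p : Fin 4 → ℤ) : ℝ :=
  1 / ((∑ i, (p i : ℝ)^2) + (∑ i, (p i : ℝ))^2 + m^2)^2

lemma f_eq_g {p : Fin 4 → ℤ} {k : ℕ} (h : Qz p = (k:ℤ)) : f m p = g m k := by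
  unfold f g
  have h2 : (∑ i, (p i : ℝ)^2) + (∑ i, (p i : ℝ))^2 = (k:ℝ) := by
    have h3 := Qz_cast p
    rw [h] at h3
    simp only [Qr] at h3
    push_cast at h3
    linarith [h3]
  rw [h2]

/-- partial sums of the weighted lattice sum -/
def Ssum (n : ℕ) : ℝ := ∑ p ∈ E n, f m p

lemma Ssum_zero : Ssum m 0 = (Ncard 0 : ℝ) * g m 0 := by
  unfold Ssum Ncard
  rw [Finset.sum_congr rfl (fun p hp => f_eq_g m (k := 0) (by
    have h1 := mem_E.1 hp
    have h2 := Qz_nonneg p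
    push_cast at h1 ⊢
    omega))]
  rw [Finset.sum_const, nsmul_eq_mul]

lemma Ssum_succ (n : ℕ) :
    Ssum m (n+1) = Ssum m n + ((Ncard (n+1) : ℝ) - (Ncard n : ℝ)) * g m (n+1) := by
  have hsub : E n ⊆ E (n+1) := E_mono (Nat.le_succ n)
  have hdiff : ∀ p ∈ E (n+1) \ E n, f m p = g m (n+1) := by
    intro p hp
    rw [Finset.mem_sdiff] at hp
    have h1 := mem_E.1 hp.1
    have h2 : ¬ (Qz p ≤ (n:ℤ)) := fun h => hp.2 (mem_E.2 h)
    refine f_eq_g m ?_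
    push_cast at h1 h2 ⊢
    omega
  have hs := Finset.sum_sdiff (f := f m) hsub
  unfold Ssum
  rw [← hs, Finset.sum_congr rfl hdiff, Finset.sum_const, Finset.card_sdiff_of_subset hsub,
    nsmul_eq_mul, Nat.cast_sub (Finset.card_le_card hsub)]
  unfold Ncard
  ring

/-- Abel summation identity -/
lemma Ssum_eq (n : ℕ) :
    Ssum m n = (Ncard n : ℝ) * g m n
      + ∑ k ∈ Finset.range n, (Ncard k : ℝ) * (g m k - g m (k+1)) := by
  induction n with
  | zero => simpa using Ssum_zero m
  | succ n ih =>
    rw [Ssum_succ, ih, Finset.sum_range_succ]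
    ring

end WithM

/-! ### Asymptotics -/

lemma tendsto_Ng {m : ℝ} (hm : 0 < m) :
    Tendsto (fun n : ℕ => (Ncard n : ℝ) * g m n) atTop (nhds V) := by
  have h0 : Tendsto (fun n : ℕ => m^2 / (n:ℝ)) atTop (nhds 0) :=
    tendsto_const_div_atTop_nhds_zero_nat _
  have t1 : Tendsto (fun n : ℕ => 1 / (1 + m^2/(n:ℝ))) atTop (nhds 1) := by
    have h := ((tendsto_const_nhds (x := (1:ℝ)) (f := atTop (α := ℕ))).add h0).inv₀ (by norm_num)
    rw [add_zero, inv_one] at h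
    simpa [one_div] using h
  have t2 : Tendsto (fun n : ℕ => (n:ℝ)^2 * g m n) atTop (nhds 1) := by
    have h := t1.pow 2
    rw [one_pow] at h
    apply h.congr'
    filter_upwards [eventually_ge_atTop 1] with n hn
    have hn' : (0:ℝ) < n := by exact_mod_cast hn
    have hne : ((n:ℝ)) + m^2 ≠ 0 := by positivity
    unfold g
    field_simp
  have := tendsto_Ncard_div.mul t2
  rw [mul_one] at this
  apply this.congr'
  filter_upwards [eventually_ge_atTop 1] with n hn
  have hn' : (0:ℝ) < n := by exact_mod_cast hn
  field_simp

/-- the rational-function factor -/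
def Ffac (m : ℝ) (k : ℕ) : ℝ :=
  ((1 + 1/(k:ℝ)) * (2 + (2*m^2+1)/(k:ℝ))) /
    ((1 + m^2/(k:ℝ))^2 * (1 + (1+m^2)/(k:ℝ))^2)

lemma tendsto_Ffac (m : ℝ) : Tendsto (Ffac m) atTop (nhds 2) := by
  have h0 : ∀ c : ℝ, Tendsto (fun k : ℕ => c / (k:ℝ)) atTop (nhds 0) :=
    fun c => tendsto_const_div_atTop_nhds_zero_nat c
  have ha : Tendsto (fun k : ℕ => 1 + 1/(k:ℝ)) atTop (nhds 1) := by
    simpa using (tendsto_const_nhds (x := (1:ℝ))).add (h0 1)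
  have hb : Tendsto (fun k : ℕ => 2 + (2*m^2+1)/(k:ℝ)) atTop (nhds 2) := by
    simpa using (tendsto_const_nhds (x := (2:ℝ))).add (h0 (2*m^2+1))
  have hc : Tendsto (fun k : ℕ => 1 + m^2/(k:ℝ)) atTop (nhds 1) := by
    simpa using (tendsto_const_nhds (x := (1:ℝ))).add (h0 (m^2))
  have hd : Tendsto (fun k : ℕ => 1 + (1+m^2)/(k:ℝ)) atTop (nhds 1) := by
    simpa using (tendsto_const_nhds (x := (1:ℝ))).add (h0 (1+m^2))
  have h := (ha.mul hb).div ((hc.pow 2).mul (hd.pow 2)) (by norm_num)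
  have h2 : ((1:ℝ) * 2) / ((1:ℝ)^2 * 1^2) = 2 := by norm_num
  rw [h2] at h
  exact h

lemma Ffac_eq {m : ℝ} (hm : 0 < m) {k : ℕ} (hk : 1 ≤ k) :
    Ffac m k = (k:ℝ)^2 * ((k:ℝ)+1) * (g m k - g m (k+1)) := by
  have hk' : (0:ℝ) < k := by exact_mod_cast hk
  have h1 : ((k:ℝ)) + m^2 ≠ 0 := by positivity
  have h2 : ((k:ℝ)) + 1 + m^2 ≠ 0 := by positivity
  have h3 : ((k:ℝ)) ≠ 0 := by positivity
  unfold Ffac g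
  push_cast
  have h2' : ((k:ℝ)) + 1 + m^2 ≠ 0 := h2
  field_simp
  ring

lemma tendsto_b {m : ℝ} (hm : 0 < m) :
    Tendsto (fun k : ℕ => ((k:ℝ)+1) * ((Ncard k : ℝ) * (g m k - g m (k+1))))
      atTop (nhds (2*V)) := by
  have := tendsto_Ncard_div.mul (tendsto_Ffac m)
  rw [show V * 2 = 2 * V by ring] at this
  apply this.congr'
  filter_upwards [eventually_ge_atTop 1] with k hk
  have hk' : (0:ℝ) < k := by exact_mod_cast hk
  rw [Ffac_eq hm hk]
  field_simp

/-- main asymptotic on ℕ -/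
lemma tendsto_Ssum_div_log {m : ℝ} (hm : 0 < m) :
    Tendsto (fun n : ℕ => Ssum m n / Real.log n) atTop (nhds (2*V)) := by
  set b : ℕ → ℝ := fun k => (Ncard k : ℝ) * (g m k - g m (k+1)) with hbdef
  set w : ℕ → ℝ := fun k => 1/((k:ℝ)+1) with hwdef
  have hw0 : ∀ k, 0 ≤ w k := fun k => by positivity
  have hwne : ∀ k, w k ≠ 0 := fun k => by positivity
  have hWtop : Tendsto (fun n => ∑ k ∈ Finset.range n, w k) atTop atTop := by
    apply Real.tendsto_sum_range_one_div_nat_succ_atTop.congr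
    intro n
    apply Finset.sum_congr rfl
    intro k _
    simp [hwdef]
  have hlog : Tendsto (fun n : ℕ => Real.log n) atTop atTop :=
    Real.tendsto_log_atTop.comp tendsto_natCast_atTop_atTop
  have hlo : (fun k => b k - (2*V) * w k) =o[atTop] w := by
    rw [Asymptotics.isLittleO_iff_tendsto (fun k hk => absurd hk (hwne k))]
    have heq : (fun k : ℕ => (b k - 2*V*w k)/w k)
        = fun k : ℕ => ((k:ℝ)+1) * b k - 2*V := by
      funext k
      have : ((k:ℝ)+1) ≠ 0 := by positivity
      simp only [hwdef]
      field_simp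
    rw [heq]
    have := (tendsto_b hm).sub_const (2*V)
    simpa using this
  have hsum := hlo.sum_range hw0 hWtop
  have hratio := hsum.tendsto_div_nhds_zero
  have hH : Tendsto (fun n : ℕ => (∑ k ∈ Finset.range n, w k) - Real.log n) atTop
      (nhds Real.eulerMascheroniConstant) := by
    apply Real.tendsto_harmonic_sub_log.congr
    intro n
    congr 1
    rw [harmonic]
    push_cast
    apply Finset.sum_congr rfl
    intro k _
    simp [hwdef]
  have hHlog : Tendsto (fun n : ℕ => (∑ k ∈ Finset.range n, w k)/Real.log n) atTop (nhds 1) := by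
    have h1 := hH.div_atTop hlog
    have h2 := h1.add_const 1
    rw [zero_add] at h2
    apply h2.congr'
    filter_upwards [eventually_ge_atTop 2] with n hn
    have hlogpos : (0:ℝ) < Real.log n := by
      apply Real.log_pos
      exact_mod_cast Nat.lt_of_lt_of_le (by norm_num) hn
    field_simp
    ring
  have hP : Tendsto (fun n => (∑ k ∈ Finset.range n, b k)/Real.log n) atTop (nhds (2*V)) := by
    have hcomb := (hratio.mul hHlog).add ((tendsto_const_nhds (x := 2*V)).mul hHlog)
    rw [zero_mul, zero_add, mul_one] at hcomb
    apply hcomb.congr'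
    filter_upwards [eventually_ge_atTop 2] with n hn
    have hHpos : 0 < ∑ k ∈ Finset.range n, w k := by
      apply Finset.sum_pos (fun k _ => by positivity)
      exact Finset.nonempty_range_iff.2 (by omega)
    have hsplit : ∑ k ∈ Finset.range n, b k
        = (∑ k ∈ Finset.range n, (b k - 2*V*w k)) + 2*V*∑ k ∈ Finset.range n, w k := by
      rw [Finset.sum_sub_distrib, Finset.mul_sum]
      ring
    rw [hsplit]
    field_simp
    try ring
  have hNg0 : Tendsto (fun n : ℕ => (Ncard n : ℝ) * g m n / Real.log n) atTop (nhds 0) :=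
    (tendsto_Ng hm).div_atTop hlog
  have hfinal := hNg0.add hP
  rw [zero_add] at hfinal
  apply hfinal.congr
  intro n
  rw [Ssum_eq m n, add_div]

/-! ### Final assembly -/

lemma f_nonneg (m : ℝ) (p : Fin 4 → ℤ) : 0 ≤ f m p := by
  unfold f
  positivity

lemma ball_set_finite (Λ : ℝ) :
    ({p : Fin 4 → ℤ | Real.sqrt (∑ i, (p i : ℝ) ^ 2) ≤ Λ}).Finite := by
  rcases lt_or_ge Λ 0 with h | h
  · convert Set.finite_empty
    ext p
    simp only [Set.mem_setOf_eq, Set.mem_empty_iff_false, iff_false, not_le]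
    exact h.trans_le (Real.sqrt_nonneg _)
  · apply Set.Finite.subset (Set.finite_range (fun p : E ⌊5*Λ^2⌋₊ => (p : Fin 4 → ℤ)))
    intro p hp
    simp only [Set.mem_setOf_eq] at hp
    have hsum : (∑ i, (p i : ℝ)^2) ≤ Λ^2 := by
      have h1 : Real.sqrt (∑ i, (p i : ℝ)^2) ^ 2 ≤ Λ^2 :=
        pow_le_pow_left₀ (Real.sqrt_nonneg _) hp 2
      rwa [Real.sq_sqrt (Finset.sum_nonneg fun i _ => sq_nonneg _)] at h1
    have hQ : (Qz p : ℝ) ≤ 5*Λ^2 := by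
      have h2 : (Qz p : ℝ) ≤ 5 * ∑ i, (p i : ℝ)^2 := by
        have := Qz_le_five p
        calc (Qz p : ℝ) ≤ ((5 * ∑ i, (p i)^2 : ℤ) : ℝ) := by exact_mod_cast this
        _ = 5 * ∑ i, (p i : ℝ)^2 := by push_cast; ring
      linarith
    have hmem : p ∈ E ⌊5*Λ^2⌋₊ := by
      rw [mem_E]
      have h3 : Qz p ≤ ⌊(5*Λ^2 : ℝ)⌋ := Int.le_floor.2 hQ
      have h4 : ((⌊5*Λ^2⌋₊ : ℕ) : ℤ) = ⌊(5*Λ^2 : ℝ)⌋ := by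
        rw [Int.natCast_floor_eq_floor (by positivity)]
      omega
    exact ⟨⟨p, hmem⟩, rfl⟩

lemma ball_toFinset_subset {Λ : ℝ} (hΛ : 0 ≤ Λ) :
    (ball_set_finite Λ).toFinset ⊆ E ⌊5*Λ^2⌋₊ := by
  intro p hp
  rw [Set.Finite.mem_toFinset] at hp
  simp only [Set.mem_setOf_eq] at hp
  have hsum : (∑ i, (p i : ℝ)^2) ≤ Λ^2 := by
    have h1 : Real.sqrt (∑ i, (p i : ℝ)^2) ^ 2 ≤ Λ^2 :=
      pow_le_pow_left₀ (Real.sqrt_nonneg _) hp 2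
    rwa [Real.sq_sqrt (Finset.sum_nonneg fun i _ => sq_nonneg _)] at h1
  have hQ : (Qz p : ℝ) ≤ 5*Λ^2 := by
    have h2 : (Qz p : ℝ) ≤ 5 * ∑ i, (p i : ℝ)^2 := by
      have := Qz_le_five p
      calc (Qz p : ℝ) ≤ ((5 * ∑ i, (p i)^2 : ℤ) : ℝ) := by exact_mod_cast this
      _ = 5 * ∑ i, (p i : ℝ)^2 := by push_cast; ring
    linarith
  rw [mem_E]
  have h3 : Qz p ≤ ⌊(5*Λ^2 : ℝ)⌋ := Int.le_floor.2 hQ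
  have h4 : ((⌊5*Λ^2⌋₊ : ℕ) : ℤ) = ⌊(5*Λ^2 : ℝ)⌋ := by
    rw [Int.natCast_floor_eq_floor (by positivity)]
  omega

lemma subset_ball_toFinset {Λ : ℝ} (hΛ : 0 ≤ Λ) :
    E ⌊Λ^2⌋₊ ⊆ (ball_set_finite Λ).toFinset := by
  intro p hp
  rw [Set.Finite.mem_toFinset]
  simp only [Set.mem_setOf_eq]
  have hQ := mem_E.1 hp
  have h1 : (∑ i, (p i)^2 : ℤ) ≤ ⌊Λ^2⌋₊ := le_trans (sum_sq_le_Qz p) hQ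
  have h2 : (∑ i, (p i : ℝ)^2) ≤ Λ^2 := by
    calc (∑ i, (p i : ℝ)^2) = ((∑ i, (p i)^2 : ℤ) : ℝ) := by push_cast; ring
    _ ≤ ((⌊Λ^2⌋₊ : ℕ) : ℝ) := by exact_mod_cast h1
    _ ≤ Λ^2 := Nat.floor_le (by positivity)
  calc Real.sqrt (∑ i, (p i : ℝ)^2) ≤ Real.sqrt (Λ^2) := Real.sqrt_le_sqrt h2
  _ = Λ := Real.sqrt_sq hΛ

lemma tsum_eq_finsum (m : ℝ) (Λ : ℝ) :
    (∑' p : Fin 4 → ℤ,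
        Set.indicator {p : Fin 4 → ℤ | Real.sqrt (∑ i, (p i : ℝ) ^ 2) ≤ Λ}
          (fun p => 1 / ((∑ i, (p i : ℝ) ^ 2) + (∑ i, (p i : ℝ)) ^ 2 + m ^ 2) ^ 2) p)
      = ∑ p ∈ (ball_set_finite Λ).toFinset, f m p := by
  rw [tsum_eq_sum (s := (ball_set_finite Λ).toFinset) ?_]
  · apply Finset.sum_congr rfl
    intro p hp
    rw [Set.Finite.mem_toFinset] at hp
    rw [Set.indicator_of_mem hp]
    rfl
  · intro p hp
    apply Set.indicator_of_notMem
    intro h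
    exact hp ((Set.Finite.mem_toFinset _).2 h)

/-- `log ⌊c·Λ²⌋₊ / log Λ → 2` -/
lemma tendsto_log_floor_sq {c : ℝ} (hc : 1 ≤ c) :
    Tendsto (fun Λ : ℝ => Real.log ⌊c*Λ^2⌋₊ / Real.log Λ) atTop (nhds 2) := by
  have hlog : Tendsto Real.log atTop atTop := Real.tendsto_log_atTop
  have hlow : Tendsto (fun Λ : ℝ => 2 - Real.log 2 / Real.log Λ) atTop (nhds 2) := by
    have := (tendsto_const_nhds (x := Real.log 2)).div_atTop hlog
    simpa using (tendsto_const_nhds (x := (2:ℝ))).sub this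
  have hup : Tendsto (fun Λ : ℝ => 2 + Real.log (2*c) / Real.log Λ) atTop (nhds 2) := by
    have := (tendsto_const_nhds (x := Real.log (2*c))).div_atTop hlog
    simpa using (tendsto_const_nhds (x := (2:ℝ))).add this
  apply tendsto_of_tendsto_of_tendsto_of_le_of_le' hlow hup
  · filter_upwards [eventually_ge_atTop 2] with Λ hΛ
    have hΛ0 : (0:ℝ) < Λ := by linarith
    have hlogΛ : 0 < Real.log Λ := Real.log_pos (by linarith)
    have hfl : (Λ^2/2 : ℝ) ≤ (⌊c*Λ^2⌋₊ : ℝ) := by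
      have h1 : (c*Λ^2 - 1 : ℝ) < ⌊c*Λ^2⌋₊ := Nat.sub_one_lt_floor _
      nlinarith
    have hpos : (0:ℝ) < Λ^2/2 := by positivity
    have h2 : Real.log (Λ^2/2) ≤ Real.log ⌊c*Λ^2⌋₊ := Real.log_le_log hpos hfl
    have h3 : Real.log (Λ^2/2) = 2*Real.log Λ - Real.log 2 := by
      rw [Real.log_div (by positivity) (by norm_num), Real.log_pow]
      push_cast; ring
    have h4 : 2*Real.log Λ - Real.log 2 ≤ Real.log ⌊c*Λ^2⌋₊ := by rw [← h3]; exact h2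
    have h5 := (div_le_div_iff_of_pos_right hlogΛ).2 h4
    calc 2 - Real.log 2 / Real.log Λ = (2*Real.log Λ - Real.log 2)/Real.log Λ := by
          field_simp
    _ ≤ _ := h5
  · filter_upwards [eventually_ge_atTop 2] with Λ hΛ
    have hΛ0 : (0:ℝ) < Λ := by linarith
    have hlogΛ : 0 < Real.log Λ := Real.log_pos (by linarith)
    have hfl : (Λ^2/2 : ℝ) ≤ (⌊c*Λ^2⌋₊ : ℝ) := by
      have h1 : (c*Λ^2 - 1 : ℝ) < ⌊c*Λ^2⌋₊ := Nat.sub_one_lt_floor _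
      nlinarith
    have hfl2 : ((⌊c*Λ^2⌋₊:ℕ):ℝ) ≤ c*Λ^2 := Nat.floor_le (by positivity)
    have h6 : Real.log ⌊c*Λ^2⌋₊ ≤ Real.log (2*c) + 2*Real.log Λ := by
      calc Real.log ⌊c*Λ^2⌋₊ ≤ Real.log (c*Λ^2) := Real.log_le_log (by nlinarith) hfl2
      _ = Real.log c + 2*Real.log Λ := by
          rw [Real.log_mul (by positivity) (by positivity), Real.log_pow]
          push_cast
          ring
      _ ≤ Real.log (2*c) + 2*Real.log Λ := by
          have : Real.log c ≤ Real.log (2*c) := Real.log_le_log (by linarith) (by linarith)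
          linarith
    have h7 := (div_le_div_iff_of_pos_right hlogΛ).2 h6
    calc Real.log ⌊c*Λ^2⌋₊ / Real.log Λ
        ≤ (Real.log (2*c) + 2*Real.log Λ)/Real.log Λ := h7
    _ = 2 + Real.log (2*c) / Real.log Λ := by field_simp; ring

end Stmt17
end Stmt17Aux

open Stmt17

/-- For `m > 0`, with `χ(p) = |p|² + σ(p)² + m²` on `ℤ⁴`,
`lim_{Λ→∞} (1/log Λ) · ∑_{‖p‖₂≤Λ} χ(p)⁻² = 2π²/√5`. -/
theorem stmt17 (m : ℝ) (hm : 0 < m) :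
    Tendsto (fun Λ : ℝ =>
      (1 / Real.log Λ) *
        ∑' p : Fin 4 → ℤ,
          Set.indicator {p : Fin 4 → ℤ | Real.sqrt (∑ i, (p i : ℝ) ^ 2) ≤ Λ}
            (fun p =>
              1 / ((∑ i, (p i : ℝ) ^ 2) + (∑ i, (p i : ℝ)) ^ 2 + m ^ 2) ^ 2) p)
      atTop (nhds (2 * Real.pi ^ 2 / Real.sqrt 5)) := by
  have hfloor : ∀ c : ℝ, 1 ≤ c → Tendsto (fun Λ : ℝ => ⌊c*Λ^2⌋₊) atTop atTop := by
    intro c hc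
    apply tendsto_nat_floor_atTop.comp
    exact (tendsto_pow_atTop (by norm_num : (2:ℕ) ≠ 0)).const_mul_atTop (by linarith)
  have hmain := tendsto_Ssum_div_log (m := m) hm
  have haux : ∀ c : ℝ, 1 ≤ c →
      Tendsto (fun Λ : ℝ => (1/Real.log Λ) * Ssum m ⌊c*Λ^2⌋₊) atTop
        (nhds (2*Real.pi^2/Real.sqrt 5)) := by
    intro c hc
    have h1 : Tendsto (fun Λ : ℝ => Ssum m ⌊c*Λ^2⌋₊ / Real.log ⌊c*Λ^2⌋₊) atTop
        (nhds (2*V)) := hmain.comp (hfloor c hc)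
    have h3 := h1.mul (tendsto_log_floor_sq hc)
    have hval : (2*V)*2 = 2*Real.pi^2/Real.sqrt 5 := by
      unfold V
      have h5 : Real.sqrt 5 ≠ 0 := ne_of_gt (Real.sqrt_pos.2 (by norm_num))
      field_simp
    rw [hval] at h3
    apply h3.congr'
    filter_upwards [eventually_ge_atTop 2] with Λ hΛ
    have hlogΛ : Real.log Λ ≠ 0 := ne_of_gt (Real.log_pos (by linarith))
    have hflge : (2:ℝ) ≤ (⌊c*Λ^2⌋₊:ℝ) := by
      have h1' : (c*Λ^2 - 1 : ℝ) < ⌊c*Λ^2⌋₊ := Nat.sub_one_lt_floor _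
      nlinarith
    have hlogn : Real.log (⌊c*Λ^2⌋₊:ℝ) ≠ 0 := ne_of_gt (Real.log_pos (by linarith))
    field_simp
    try ring
  apply tendsto_of_tendsto_of_tendsto_of_le_of_le' (haux 1 le_rfl) (haux 5 (by norm_num))
  · filter_upwards [eventually_ge_atTop 2] with Λ hΛ
    have hΛ0 : (0:ℝ) ≤ Λ := by linarith
    have hlogΛ : (0:ℝ) < 1/Real.log Λ := by
      have := Real.log_pos (show (1:ℝ) < Λ by linarith)
      positivity
    rw [tsum_eq_finsum m Λ]
    have hsum : Ssum m ⌊1*Λ^2⌋₊ ≤ ∑ p ∈ (ball_set_finite Λ).toFinset, f m p := by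
      rw [show (1:ℝ)*Λ^2 = Λ^2 by ring]
      exact Finset.sum_le_sum_of_subset_of_nonneg (subset_ball_toFinset hΛ0)
        (fun p _ _ => f_nonneg m p)
    exact mul_le_mul_of_nonneg_left hsum hlogΛ.le
  · filter_upwards [eventually_ge_atTop 2] with Λ hΛ
    have hΛ0 : (0:ℝ) ≤ Λ := by linarith
    have hlogΛ : (0:ℝ) < 1/Real.log Λ := by
      have := Real.log_pos (show (1:ℝ) < Λ by linarith)
      positivity
    rw [tsum_eq_finsum m Λ]
    have hsum : ∑ p ∈ (ball_set_finite Λ).toFinset, f m p ≤ Ssum m ⌊5*Λ^2⌋₊ :=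
      Finset.sum_le_sum_of_subset_of_nonneg (ball_toFinset_subset hΛ0)
        (fun p _ _ => f_nonneg m p)
    exact mul_le_mul_of_nonneg_left hsum hlogΛ.le
end
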